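/- arXiv:2211.04965 — 7 statements merged into one kernel-verified Lean document; each statement's English description precedes it below -/
import Mathlib

section
/- (Parameter shift rule for expectation values with an involutory generator.) Let n ≥ 1, let G and H be n×n complex Hermitian matrices with G² = I (the identity matrix), and let ψ ∈ ℂⁿ. Define f : ℝ → ℝ by f(θ) = Re⟨ψ, exp(i(θ/2)G) · H · exp(−i(θ/2)G) ψ⟩, where exp denotes the matrix exponential and ⟨·,·⟩ the standard Hermitian inner product on ℂⁿ. Then for every θ ∈ ℝ, f is differentiable at θ and f′(θ) = (f(θ + π/2) − f(θ − π/2))/2. -/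
open Real Matrix

/-- The expectation-value curve `θ ↦ Re⟨ψ, exp(i(θ/2)G) H exp(-i(θ/2)G) ψ⟩` obtained by
conjugating the observable `H` with the one-parameter gate generated by `G`. -/
noncomputable def expectationCurve {n : ℕ} (G H : Matrix (Fin n) (Fin n) ℂ)
    (ψ : Fin n → ℂ) (θ : ℝ) : ℝ :=
  (dotProduct (star ψ)
    ((NormedSpace.exp ((Complex.I * ((θ : ℂ) / 2)) • G) * H *
        NormedSpace.exp ((-Complex.I * ((θ : ℂ) / 2)) • G)) *ᵥ ψ)).re

theorem exp_involutory_smul {n : ℕ} (G : Matrix (Fin n) (Fin n) ℂ) (hG2 : G * G = 1) (s : ℝ) :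
    NormedSpace.exp ((Complex.I * (s : ℂ)) • G)
      = (Complex.cos s) • (1 : Matrix (Fin n) (Fin n) ℂ) + (Complex.I * Complex.sin s) • G := by
  have heven : ∀ k : ℕ, G ^ (2 * k) = 1 := by
    intro k; rw [pow_mul, pow_two, hG2, one_pow]
  have hodd : ∀ k : ℕ, G ^ (2 * k + 1) = G := by
    intro k; rw [pow_succ, heven, one_mul]
  set x := (Complex.I * (s:ℂ)) • G with hx
  have h1 : HasSum (fun k : ℕ => (((2*k).factorial : ℂ))⁻¹ • x ^ (2*k))
      ((Complex.cos s) • (1 : Matrix (Fin n) (Fin n) ℂ)) := by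
    have := (Complex.hasSum_cos (s : ℂ)).smul_const (1 : Matrix (Fin n) (Fin n) ℂ)
    convert this using 2 with k
    rw [hx, smul_pow, heven, smul_smul]
    congr 1
    rw [mul_pow, pow_mul, Complex.I_sq]
    have : (((2*k).factorial : ℂ)) ≠ 0 := Nat.cast_ne_zero.mpr (Nat.factorial_ne_zero _)
    field_simp
  have h2 : HasSum (fun k : ℕ => (((2*k+1).factorial : ℂ))⁻¹ • x ^ (2*k+1))
      ((Complex.I * Complex.sin s) • G) := by
    have := ((Complex.hasSum_sin (s : ℂ)).mul_left Complex.I).smul_const G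
    convert this using 2 with k
    rw [hx, smul_pow, hodd, smul_smul]
    congr 1
    rw [mul_pow, pow_succ, pow_mul, Complex.I_sq]
    have : (((2*k+1).factorial : ℂ)) ≠ 0 := Nat.cast_ne_zero.mpr (Nat.factorial_ne_zero _)
    field_simp
  have h : HasSum (fun m : ℕ => ((m.factorial : ℂ))⁻¹ • x ^ m)
      ((Complex.cos s) • (1 : Matrix (Fin n) (Fin n) ℂ) + (Complex.I * Complex.sin s) • G) :=
    HasSum.even_add_odd h1 h2
  rw [NormedSpace.exp_eq_tsum ℂ]
  exact h.tsum_eq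

theorem expectationCurve_eq {n : ℕ} (G H : Matrix (Fin n) (Fin n) ℂ) (hG2 : G * G = 1)
    (ψ : Fin n → ℂ) (θ : ℝ) :
    expectationCurve G H ψ θ =
      (dotProduct (star ψ) (((2:ℂ)⁻¹ • (H + G*H*G)) *ᵥ ψ)).re
      + Real.cos θ * (dotProduct (star ψ) (((2:ℂ)⁻¹ • (H - G*H*G)) *ᵥ ψ)).re
      + Real.sin θ * (dotProduct (star ψ) (((Complex.I/2) • (G*H - H*G)) *ᵥ ψ)).re := by
  have e1 : (Complex.I * ((θ : ℂ) / 2)) • G = (Complex.I * ((θ/2 : ℝ) : ℂ)) • G := by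
    push_cast; ring_nf
  have e2 : (-Complex.I * ((θ : ℂ) / 2)) • G = (Complex.I * ((-(θ/2) : ℝ) : ℂ)) • G := by
    push_cast; ring_nf
  rw [expectationCurve, e1, e2, exp_involutory_smul G hG2, exp_involutory_smul G hG2]
  set c : ℂ := Complex.cos ((θ/2 : ℝ) : ℂ) with hc
  set s : ℂ := Complex.sin ((θ/2 : ℝ) : ℂ) with hs
  have hcos : Complex.cos ((-(θ/2) : ℝ) : ℂ) = c := by push_cast [Complex.cos_neg]; rw [hc]; norm_num
  have hsin : Complex.sin ((-(θ/2) : ℝ) : ℂ) = -s := by push_cast [Complex.sin_neg]; rw [hs]; norm_num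
  rw [hcos, hsin]
  have key : (c • (1 : Matrix (Fin n) (Fin n) ℂ) + (Complex.I * s) • G) * H *
      (c • (1 : Matrix (Fin n) (Fin n) ℂ) + (Complex.I * -s) • G)
      = (2:ℂ)⁻¹ • (H + G*H*G) + ((Real.cos θ : ℂ)) • ((2:ℂ)⁻¹ • (H - G*H*G))
        + ((Real.sin θ : ℂ)) • ((Complex.I/2) • (G*H - H*G)) := by
    have hhalf : 2 * ((θ : ℂ) / 2) = (θ : ℂ) := by ring
    have h1 : c * c = ((1 + Real.cos θ : ℝ) : ℂ) / 2 := by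
      rw [hc]
      push_cast
      rw [← sq, Complex.cos_sq, hhalf]
      ring
    have h2 : s * s = ((1 - Real.cos θ : ℝ) : ℂ) / 2 := by
      rw [hs]
      push_cast
      rw [← sq, Complex.sin_sq, Complex.cos_sq, hhalf]
      ring
    have h3 : c * s = ((Real.sin θ : ℝ) : ℂ) / 2 := by
      rw [hc, hs]
      push_cast
      rw [show (θ:ℂ) = 2 * ((θ:ℂ)/2) by ring, Complex.sin_two_mul, hhalf]
      ring
    have expand : (c • (1 : Matrix (Fin n) (Fin n) ℂ) + (Complex.I * s) • G) * H *
        (c • (1 : Matrix (Fin n) (Fin n) ℂ) + (Complex.I * -s) • G)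
        = (c*c) • H + (Complex.I * (c*s)) • (G*H) - (Complex.I * (c*s)) • (H*G)
          + (s*s) • (G*H*G) := by
      simp only [add_mul, mul_add, smul_mul_assoc, mul_smul_comm, one_mul, mul_one, smul_smul]
      match_scalars
      · ring
      · ring
      · ring
      · linear_combination (-s^2) * Complex.I_sq
    rw [expand, h1, h2, h3]
    have hI : Complex.I * Complex.I = -1 := Complex.I_mul_I
    push_cast
    match_scalars <;> ring
  rw [key]
  simp only [Matrix.add_mulVec, Matrix.smul_mulVec, dotProduct_add,
    dotProduct_smul, smul_eq_mul, Complex.add_re]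
  rw [Complex.re_ofReal_mul, Complex.re_ofReal_mul]

/-- **Parameter shift rule for expectation values with an involutory generator.**
If `G, H` are Hermitian and `G² = 1`, then
`f θ = Re⟨ψ, exp(i(θ/2)G) H exp(-i(θ/2)G) ψ⟩` is differentiable with
`f' θ = (f (θ + π/2) - f (θ - π/2)) / 2`. -/
theorem parameter_shift_rule_involutory_generator
    {n : ℕ} (hn : 1 ≤ n) (G H : Matrix (Fin n) (Fin n) ℂ)
    (hG : G.IsHermitian) (hH : H.IsHermitian) (hG2 : G * G = 1)
    (ψ : Fin n → ℂ) (θ : ℝ) :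
    HasDerivAt (expectationCurve G H ψ)
      ((expectationCurve G H ψ (θ + π / 2) - expectationCurve G H ψ (θ - π / 2)) / 2)
      θ := by

  set a : ℝ := (dotProduct (star ψ) (((2:ℂ)⁻¹ • (H + G*H*G)) *ᵥ ψ)).re
  set b : ℝ := (dotProduct (star ψ) (((2:ℂ)⁻¹ • (H - G*H*G)) *ᵥ ψ)).re
  set cc : ℝ := (dotProduct (star ψ) (((Complex.I/2) • (G*H - H*G)) *ᵥ ψ)).re
  have hfun : expectationCurve G H ψ = fun θ : ℝ => a + Real.cos θ * b + Real.sin θ * cc := by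
    funext t
    rw [expectationCurve_eq G H hG2 ψ t]
  rw [hfun]
  have hval : (((fun θ : ℝ => a + Real.cos θ * b + Real.sin θ * cc) (θ + π / 2))
      - ((fun θ : ℝ => a + Real.cos θ * b + Real.sin θ * cc) (θ - π / 2))) / 2
      = -Real.sin θ * b + Real.cos θ * cc := by
    simp only [Real.cos_add, Real.sin_add, Real.cos_sub, Real.sin_sub,
      Real.cos_pi_div_two, Real.sin_pi_div_two]
    ring
  rw [hval]
  have : HasDerivAt (fun θ : ℝ => a + Real.cos θ * b + Real.sin θ * cc)
      (0 + (-Real.sin θ) * b + Real.cos θ * cc) θ := by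
    exact ((hasDerivAt_const θ a).add ((Real.hasDerivAt_cos θ).mul_const b)).add
      ((Real.hasDerivAt_sin θ).mul_const cc)
  simpa using this
end

section
/- (Proposition 2: U-statistic estimator of a power of an expectation value is unbiased.) Let z ≥ 1 be an integer. Let (r_k)_{k≥1} be a sequence of i.i.d. bounded real random variables with mean μ, and let s be an ℕ-valued random variable independent of the sequence (r_k), with s ≥ z almost surely and with E[C(s,z)] finite and strictly positive, where C(s,z) is the binomial coefficient. Define ξ̂ = (1/E[C(s,z)]) · Σ_{1 ≤ α₁ < α₂ < … < α_z ≤ s} r_{α₁}·r_{α₂}·⋯·r_{α_z}, the sum running over all strictly increasing z-tuples of indices between 1 and s. Then E[ξ̂] = μ^z. -/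
open MeasureTheory ProbabilityTheory

/-- **Proposition 2: the degree-`z` U-statistic with product kernel is an unbiased estimator
of `μ^z`.** Here `(r k)` is an i.i.d. sequence of bounded real random variables with mean `μ`,
and `s` is an `ℕ`-valued shot count independent of the sequence, with `s ≥ z` almost surely and
`E[C(s,z)]` finite and positive. The estimator is
`ξ̂ = (1/E[C(s,z)]) ∑_{1 ≤ α₁ < … < α_z ≤ s} r α₁ ⋯ r α_z`, the sum over all
strictly increasing `z`-tuples being realized as a sum over `z`-element subsets. -/
theorem ustatistic_power_unbiased
    {Ω : Type*} [MeasurableSpace Ω] (P : Measure Ω) [IsProbabilityMeasure P]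
    (z : ℕ) (hz : 1 ≤ z) (μ : ℝ) (r : ℕ → Ω → ℝ) (s : Ω → ℕ)
    (hrmeas : ∀ k, Measurable (r k))
    (hrbdd : ∃ C, ∀ k ω, |r k ω| ≤ C)
    (hrindep : iIndepFun r P)
    (hrident : ∀ k, IdentDistrib (r k) (r 0) P P)
    (hrmean : ∀ k, ∫ ω, r k ω ∂P = μ)
    (hsmeas : Measurable s)
    (hsindep : IndepFun s (fun ω => fun k => r k ω) P)
    (hsge : ∀ᵐ ω ∂P, z ≤ s ω)
    (hCint : Integrable (fun ω => ((s ω).choose z : ℝ)) P)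
    (hCpos : 0 < ∫ ω, ((s ω).choose z : ℝ) ∂P) :
    ∫ ω, (∫ ω', ((s ω').choose z : ℝ) ∂P)⁻¹ *
        ∑ A ∈ (Finset.range (s ω)).powersetCard z, ∏ k ∈ A, r k ω ∂P = μ ^ z := by
  classical
  obtain ⟨C, hC⟩ := hrbdd
  set D : ℝ := max C 1 with hDdef
  have hD1 : (1:ℝ) ≤ D := le_max_right _ _
  have hD0 : (0:ℝ) ≤ D := le_trans zero_le_one hD1
  have hCD : ∀ k ω, |r k ω| ≤ D := fun k ω => (hC k ω).trans (le_max_left _ _)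
  -- integrability of each r k and of products
  have hint : ∀ k, Integrable (r k) P := by
    intro k
    refine (integrable_const D).mono' (hrmeas k).aestronglyMeasurable ?_
    filter_upwards with ω
    simpa using hCD k ω
  have hprodmeas : ∀ A : Finset ℕ, Measurable (fun ω => ∏ k ∈ A, r k ω) :=
    fun A => Finset.measurable_prod A fun k _ => hrmeas k
  have hprodbdd : ∀ (A : Finset ℕ) (ω : Ω), |∏ k ∈ A, r k ω| ≤ D ^ A.card := by
    intro A ω
    rw [Finset.abs_prod]
    calc ∏ k ∈ A, |r k ω| ≤ ∏ k ∈ A, D :=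
          Finset.prod_le_prod (fun k _ => abs_nonneg _) (fun k _ => hCD k ω)
      _ = D ^ A.card := by rw [Finset.prod_const]
  have hprodint : ∀ A : Finset ℕ, Integrable (fun ω => ∏ k ∈ A, r k ω) P := by
    intro A
    refine (integrable_const (D ^ A.card)).mono' (hprodmeas A).aestronglyMeasurable ?_
    filter_upwards with ω
    simpa only [Real.norm_eq_abs] using hprodbdd A ω
  -- expectation of a product over a finset is μ ^ card
  have hEprod : ∀ A : Finset ℕ, ∫ ω, ∏ k ∈ A, r k ω ∂P = μ ^ A.card := by
    intro A
    induction A using Finset.induction_on with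
    | empty => simp
    | @insert a A ha ih =>
      have hfun : (fun ω => ∏ k ∈ insert a A, r k ω)
          = fun ω => (∏ k ∈ A, r k ω) * r a ω := by
        funext ω
        rw [Finset.prod_insert ha, mul_comm]
      have hindep : IndepFun (fun ω => ∏ k ∈ A, r k ω) (r a) P := by
        have := hrindep.indepFun_finsetProd_of_notMem hrmeas ha
        have heq : (∏ j ∈ A, r j) = fun ω => ∏ k ∈ A, r k ω := by
          funext ω; simp [Finset.prod_apply]
        rwa [heq] at this
      have hmul := IndepFun.integral_mul_eq_mul_integral hindep (hprodint A).aestronglyMeasurable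
        (hint a).aestronglyMeasurable
      rw [hfun]
      calc ∫ ω, (∏ k ∈ A, r k ω) * r a ω ∂P
          = ∫ ω, ((fun ω => ∏ k ∈ A, r k ω) * r a) ω ∂P := rfl
        _ = (∫ ω, ∏ k ∈ A, r k ω ∂P) * ∫ ω, r a ω ∂P := hmul
        _ = μ ^ (insert a A).card := by
            rw [ih, hrmean a, Finset.card_insert_of_notMem ha, pow_succ]
  -- the random vector
  set R : Ω → (ℕ → ℝ) := fun ω k => r k ω with hRdef
  have hRmeas : Measurable R := measurable_pi_lambda _ fun k => hrmeas k
  set ν : Measure ℕ := P.map s with hνdef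
  set ρ : Measure (ℕ → ℝ) := P.map R with hρdef
  have hνprob : IsProbabilityMeasure ν := Measure.isProbabilityMeasure_map hsmeas.aemeasurable
  have hρprob : IsProbabilityMeasure ρ := Measure.isProbabilityMeasure_map hRmeas.aemeasurable
  -- the kernel function
  set g : ℕ × (ℕ → ℝ) → ℝ :=
    fun p => ∑ A ∈ (Finset.range p.1).powersetCard z, ∏ k ∈ A, p.2 k with hgdef
  have hgmeas : Measurable g := by
    have hswap : Measurable fun q : (ℕ → ℝ) × ℕ => g (q.2, q.1) := by
      refine measurable_from_prod_countable_left fun n => ?_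
      show Measurable fun x : ℕ → ℝ =>
        ∑ A ∈ (Finset.range n).powersetCard z, ∏ k ∈ A, x k
      exact Finset.measurable_sum ((Finset.range n).powersetCard z) fun A _ =>
        Finset.measurable_prod A fun k _ => measurable_pi_apply k
    exact hswap.comp measurable_swap
  -- the joint law is the product law
  have hmap : P.map (fun ω => (s ω, R ω)) = ν.prod ρ :=
    (indepFun_iff_map_prod_eq_prod_map_map hsmeas.aemeasurable hRmeas.aemeasurable).mp hsindep
  -- integrability of g on the product measure
  have hfν : Integrable (fun n : ℕ => ((n.choose z : ℝ)) * D ^ z) ν := by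
    have : Integrable (fun n : ℕ => ((n.choose z : ℝ))) ν := by
      rw [hνdef, integrable_map_measure
        (measurable_from_nat (f := fun n : ℕ => ((n.choose z : ℝ)))).aestronglyMeasurable
        hsmeas.aemeasurable]
      exact hCint
    exact this.mul_const _
  have hmpfst : MeasurePreserving Prod.fst (ν.prod ρ) ν := by
    refine ⟨measurable_fst, ?_⟩
    simp [Measure.map_fst_prod]
  have hhint : Integrable (fun p : ℕ × (ℕ → ℝ) => ((p.1.choose z : ℝ)) * D ^ z) (ν.prod ρ) :=
    (hmpfst.integrable_comp
      (measurable_from_nat (f := fun n : ℕ => ((n.choose z : ℝ)) * D ^ z)).aestronglyMeasurable).mpr hfν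
  have haebdd : ∀ᵐ p ∂(ν.prod ρ), ∀ k, |p.2 k| ≤ D := by
    have hmps : MeasurePreserving Prod.snd (ν.prod ρ) ρ := by
      refine ⟨measurable_snd, ?_⟩
      simp [Measure.map_snd_prod]
    have hS : MeasurableSet {x : ℕ → ℝ | ∀ k, |x k| ≤ D} := by
      have : {x : ℕ → ℝ | ∀ k, |x k| ≤ D} = ⋂ k, {x : ℕ → ℝ | |x k| ≤ D} := by
        ext x; simp
      rw [this]
      exact MeasurableSet.iInter fun k =>
        measurableSet_le (by fun_prop) measurable_const
    have hρae : ∀ᵐ x ∂ρ, ∀ k, |x k| ≤ D := by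
      rw [hρdef, ae_map_iff hRmeas.aemeasurable hS]
      filter_upwards with ω k using hCD k ω
    have := hmps.quasiMeasurePreserving.ae hρae
    exact this
  have hgbdd : ∀ᵐ p ∂(ν.prod ρ), ‖g p‖ ≤ ((p.1.choose z : ℝ)) * D ^ z := by
    filter_upwards [haebdd] with p hp
    calc ‖g p‖ = |∑ A ∈ (Finset.range p.1).powersetCard z, ∏ k ∈ A, p.2 k| := rfl
      _ ≤ ∑ A ∈ (Finset.range p.1).powersetCard z, |∏ k ∈ A, p.2 k| :=
          Finset.abs_sum_le_sum_abs _ _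
      _ ≤ ∑ A ∈ (Finset.range p.1).powersetCard z, D ^ z := by
          refine Finset.sum_le_sum fun A hA => ?_
          have hcard : A.card = z := (Finset.mem_powersetCard.mp hA).2
          rw [Finset.abs_prod]
          calc ∏ k ∈ A, |p.2 k| ≤ ∏ k ∈ A, D :=
                Finset.prod_le_prod (fun k _ => abs_nonneg _) (fun k _ => hp k)
            _ = D ^ z := by rw [Finset.prod_const, hcard]
      _ = ((p.1.choose z : ℝ)) * D ^ z := by
          rw [Finset.sum_const, nsmul_eq_mul, Finset.card_powersetCard,
            Finset.card_range]
  have hgint : Integrable g (ν.prod ρ) :=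
    hhint.mono' hgmeas.aestronglyMeasurable hgbdd
  -- inner integral
  have hinner : ∀ n : ℕ, ∫ x, g (n, x) ∂ρ = ((n.choose z : ℝ)) * μ ^ z := by
    intro n
    have h1 : ∫ x, g (n, x) ∂ρ = ∫ ω, g (n, R ω) ∂P := by
      rw [hρdef, integral_map hRmeas.aemeasurable]
      exact (hgmeas.comp (measurable_const.prodMk measurable_id)).aestronglyMeasurable
    rw [h1]
    have h2 : ∫ ω, g (n, R ω) ∂P
        = ∑ A ∈ (Finset.range n).powersetCard z, ∫ ω, ∏ k ∈ A, r k ω ∂P := by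
      exact integral_finset_sum ((Finset.range n).powersetCard z) fun A _ => hprodint A
    rw [h2]
    have h3 : ∀ A ∈ (Finset.range n).powersetCard z,
        ∫ ω, ∏ k ∈ A, r k ω ∂P = μ ^ z := by
      intro A hA
      rw [hEprod A, (Finset.mem_powersetCard.mp hA).2]
    rw [Finset.sum_congr rfl h3, Finset.sum_const, nsmul_eq_mul,
      Finset.card_powersetCard, Finset.card_range]
  -- main computation
  set M : ℝ := ∫ ω, ((s ω).choose z : ℝ) ∂P with hMdef
  have hmain : ∫ ω, ∑ A ∈ (Finset.range (s ω)).powersetCard z, ∏ k ∈ A, r k ω ∂P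
      = M * μ ^ z := by
    have h0 : ∫ ω, ∑ A ∈ (Finset.range (s ω)).powersetCard z, ∏ k ∈ A, r k ω ∂P
        = ∫ ω, g (s ω, R ω) ∂P := rfl
    rw [h0]
    have h1 : ∫ ω, g (s ω, R ω) ∂P = ∫ p, g p ∂(P.map (fun ω => (s ω, R ω))) := by
      rw [integral_map (hsmeas.prodMk hRmeas).aemeasurable hgmeas.aestronglyMeasurable]
    rw [h1, hmap, integral_prod g hgint]
    have h2 : ∫ n, ∫ x, g (n, x) ∂ρ ∂ν = ∫ n, ((n.choose z : ℝ)) * μ ^ z ∂ν := by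
      exact integral_congr_ae (Filter.Eventually.of_forall fun n => hinner n)
    rw [h2, integral_mul_const]
    congr 1
    rw [hνdef, integral_map hsmeas.aemeasurable
      (measurable_from_nat (f := fun n : ℕ => ((n.choose z : ℝ)))).aestronglyMeasurable]
  rw [integral_const_mul, hmain, ← mul_assoc, inv_mul_cancel₀ (ne_of_gt hCpos), one_mul]
end

section
/- (Proposition 6, Appendix E: unbiased estimator for the simplified mean-squared-error loss.) Let I be a finite index set. For each i ∈ I let p_i ∈ ℝ be a weight, y_i ∈ ℝ a label, and μ_i ∈ ℝ a target expectation value. For each i ∈ I let (r_{i,k})_{k≥1} be a sequence of i.i.d. bounded real random variables with mean μ_i, the sequences for distinct i being mutually independent. Let (s_i)_{i∈I} be a family of ℕ-valued random variables, jointly independent of all outcome sequences, with E[s_i] > 0 and 0 < E[s_i(s_i − 1)] < ∞ for all i. Define Ê_i = (1/E[s_i]) Σ_{k=1}^{s_i} r_{i,k} and Q̂_i = (1/E[s_i(s_i−1)]) Σ_{1≤k,k'≤s_i, k≠k'} r_{i,k} r_{i,k'}, and the estimator L̂ = Σ_{i∈I} p_i (y_i² − 2 y_i Ê_i + Q̂_i).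 Then E[L̂] = Σ_{i∈I} p_i (y_i − μ_i)². -/
open MeasureTheory ProbabilityTheory


lemma key_aux {Ω : Type*} [MeasurableSpace Ω] (P : Measure Ω) [IsProbabilityMeasure P]
    (s : Ω → ℕ) (hs : Measurable s) (φ : ℕ → ℕ)
    (hφint : Integrable (fun ω => (φ (s ω) : ℝ)) P)
    (G : ℕ → Ω → ℝ) (hGmeas : ∀ n, Measurable (G n))
    (C : ℝ) (hGbdd : ∀ ω, |G (s ω) ω| ≤ C * φ (s ω)) :
    ∫ ω, G (s ω) ω ∂P = ∑' n, ∫ ω, (if s ω = n then (1:ℝ) else 0) * G n ω ∂P := by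
  have hGbdd' : ∀ ω, |G (s ω) ω| ≤ |C| * φ (s ω) := fun ω =>
    (hGbdd ω).trans (by
      have : (0:ℝ) ≤ (φ (s ω) : ℝ) := Nat.cast_nonneg _
      nlinarith [le_abs_self C])
  set D := |C| with hD
  set f : ℕ → Ω → ℝ := fun n ω => (if s ω = n then (1:ℝ) else 0) * G n ω with hf
  have hfpt : ∀ ω, (∑' n, f n ω) = G (s ω) ω := by
    intro ω
    rw [tsum_eq_single (s ω) (fun n hn => by simp [hf, Ne.symm hn])]
    simp [hf]
  have hindmeas : ∀ n : ℕ, Measurable (fun ω => if s ω = n then (1:ℝ) else 0) := by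
    intro n
    exact Measurable.ite (hs (measurableSet_singleton n)) measurable_const measurable_const
  have hfmeas : ∀ n, Measurable (f n) := fun n => (hindmeas n).mul (hGmeas n)
  have hbound : ∀ n ω, (‖f n ω‖₊ : ENNReal) ≤
      (if s ω = n then (1:ENNReal) else 0) * ENNReal.ofReal (D * φ (s ω)) := by
    intro n ω
    by_cases h : s ω = n
    · subst h
      simp only [hf, if_true, eq_self_iff_true, one_mul]
      rw [← enorm_eq_nnnorm, Real.enorm_eq_ofReal_abs]
      exact ENNReal.ofReal_le_ofReal (hGbdd' ω)
    · simp [hf, h]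
  have hsum_lt : (∑' n, ∫⁻ ω, ‖f n ω‖₊ ∂P) ≠ ⊤ := by
    have h1 : (∑' n, ∫⁻ ω, ‖f n ω‖₊ ∂P) ≤
        ∑' n, ∫⁻ ω, (if s ω = n then (1:ENNReal) else 0) * ENNReal.ofReal (D * φ (s ω)) ∂P := by
      refine ENNReal.tsum_le_tsum fun n => lintegral_mono fun ω => hbound n ω
    have h2 : (∑' n, ∫⁻ ω, (if s ω = n then (1:ENNReal) else 0)
        * ENNReal.ofReal (D * φ (s ω)) ∂P)
        = ∫⁻ ω, ENNReal.ofReal (D * φ (s ω)) ∂P := by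
      rw [← lintegral_tsum]
      · congr 1; funext ω
        rw [tsum_eq_single (s ω) (fun n hn => by simp [Ne.symm hn])]
        simp
      · intro n
        refine AEMeasurable.mul ?_ ?_
        · exact (Measurable.ite (hs (measurableSet_singleton n)) measurable_const
            measurable_const).aemeasurable
        · exact ((measurable_const.mul ((measurable_from_top (f := fun n : ℕ => (φ n : ℝ))).comp
            hs)).ennreal_ofReal).aemeasurable
    have h3 : ∫⁻ ω, ENNReal.ofReal (D * φ (s ω)) ∂P < ⊤ := by
      have := (hφint.const_mul D).2
      refine lt_of_le_of_lt ?_ this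
      refine lintegral_mono fun ω => ?_
      rw [Real.enorm_eq_ofReal_abs]
      exact ENNReal.ofReal_le_ofReal (le_abs_self _)
    exact (lt_of_le_of_lt (h1.trans h2.le) h3).ne
  calc ∫ ω, G (s ω) ω ∂P = ∫ ω, ∑' n, f n ω ∂P :=
        integral_congr_ae (Filter.Eventually.of_forall fun ω => (hfpt ω).symm)
    _ = ∑' n, ∫ ω, f n ω ∂P :=
        integral_tsum (fun n => (hfmeas n).aestronglyMeasurable) hsum_lt

lemma key_lemma {Ω : Type*} [MeasurableSpace Ω] (P : Measure Ω) [IsProbabilityMeasure P]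
    (s : Ω → ℕ) (hs : Measurable s) (φ : ℕ → ℕ)
    (hφint : Integrable (fun ω => (φ (s ω) : ℝ)) P)
    (G : ℕ → Ω → ℝ) (hGmeas : ∀ n, Measurable (G n))
    (C : ℝ) (hGbdd : ∀ n ω, |G n ω| ≤ C * φ n)
    (m : ℝ) (hGmean : ∀ n, ∫ ω, G n ω ∂P = m * φ n)
    (hindep : ∀ n, IndepFun (fun ω => if s ω = n then (1:ℝ) else 0) (G n) P) :
    Integrable (fun ω => G (s ω) ω) P ∧
      ∫ ω, G (s ω) ω ∂P = m * ∫ ω, (φ (s ω) : ℝ) ∂P := by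
  have hGbdd' : ∀ n ω, |G n ω| ≤ |C| * φ n := fun n ω =>
    (hGbdd n ω).trans (by
      have : (0:ℝ) ≤ (φ n : ℝ) := Nat.cast_nonneg _
      nlinarith [le_abs_self C])
  have hFmeas : Measurable (fun ω => G (s ω) ω) := by
    have : Measurable (fun q : Ω × ℕ => G q.2 q.1) :=
      measurable_from_prod_countable_left (fun n => hGmeas n)
    exact this.comp (measurable_id.prodMk hs)
  have hFint : Integrable (fun ω => G (s ω) ω) P := by
    refine (hφint.const_mul |C|).mono' hFmeas.aestronglyMeasurable ?_
    filter_upwards with ω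
    simpa [Real.norm_eq_abs] using hGbdd' (s ω) ω
  refine ⟨hFint, ?_⟩
  have hindmeas : ∀ n : ℕ, Measurable (fun ω => if s ω = n then (1:ℝ) else 0) := by
    intro n
    exact Measurable.ite (hs (measurableSet_singleton n)) measurable_const measurable_const
  have h1 : ∫ ω, G (s ω) ω ∂P
      = ∑' n, ∫ ω, (if s ω = n then (1:ℝ) else 0) * G n ω ∂P :=
    key_aux P s hs φ hφint G hGmeas C (fun ω => hGbdd (s ω) ω)
  have h2 : ∫ ω, (fun n ω => (φ (s ω) : ℝ)) (s ω) ω ∂P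
      = ∑' n, ∫ ω, (if s ω = n then (1:ℝ) else 0) * (φ (s ω) : ℝ) ∂P :=
    key_aux P s hs φ hφint (fun n ω => (φ (s ω) : ℝ))
      (fun n => (measurable_from_top (f := fun k : ℕ => (φ k : ℝ))).comp hs) 1
      (fun ω => by simp [abs_of_nonneg])
  have h3 : ∀ n, ∫ ω, (if s ω = n then (1:ℝ) else 0) * (φ (s ω) : ℝ) ∂P
      = (∫ ω, (if s ω = n then (1:ℝ) else 0) ∂P) * (φ n : ℝ) := by
    intro n
    rw [← integral_mul_const]
    refine integral_congr_ae (Filter.Eventually.of_forall fun ω => ?_)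
    by_cases h : s ω = n <;> simp [h]
  have h4 : ∀ n, ∫ ω, (if s ω = n then (1:ℝ) else 0) * G n ω ∂P
      = m * ((∫ ω, (if s ω = n then (1:ℝ) else 0) ∂P) * (φ n : ℝ)) := by
    intro n
    rw [(hindep n).integral_fun_mul_eq_mul_integral (hindmeas n).aestronglyMeasurable
      (hGmeas n).aestronglyMeasurable, hGmean n]
    ring
  rw [h1]
  simp only [h4]
  rw [tsum_mul_left]
  congr 1
  rw [show (∫ ω, (φ (s ω) : ℝ) ∂P) = ∫ ω, (fun n ω => (φ (s ω) : ℝ)) (s ω) ω ∂P from rfl, h2]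
  exact tsum_congr fun n => (h3 n).symm


/-- **Proposition 6 (Appendix E): unbiased estimator for the simplified MSE loss.**
For weights `p i`, labels `y i` and target expectations `μ i`, with i.i.d. bounded outcome
sequences `(r i k)` of mean `μ i` (mutually independent across distinct `i`), and shot counts
`(s i)` jointly independent of all outcomes with `E[s i] > 0` and `0 < E[s i (s i - 1)] < ∞`,
the estimator `L̂ = ∑ i, p i * ((y i)² - 2 y i Ê i + Q̂ i)` with
`Ê i = (1/E[s i]) ∑_{k=1}^{s i} r i k` and
`Q̂ i = (1/E[s i (s i -1)]) ∑_{1≤k,k'≤s i, k≠k'} r i k * r i k'` satisfies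
`E[L̂] = ∑ i, p i * (y i - μ i)²`. -/
theorem unbiased_estimator_simplified_mse
    {Ω : Type*} [MeasurableSpace Ω] (P : Measure Ω) [IsProbabilityMeasure P]
    {I : Type*} [Fintype I]
    (p y μ : I → ℝ) (r : I → ℕ → Ω → ℝ) (s : I → Ω → ℕ)
    (hrmeas : ∀ i k, Measurable (r i k))
    (hrbdd : ∀ i, ∃ C, ∀ k ω, |r i k ω| ≤ C)
    (hrindep : iIndepFun (fun p : I × ℕ => r p.1 p.2) P)
    (hrident : ∀ i k, IdentDistrib (r i k) (r i 0) P P)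
    (hrmean : ∀ i k, ∫ ω, r i k ω ∂P = μ i)
    (hsmeas : ∀ i, Measurable (s i))
    (hsindep : IndepFun (fun ω => fun i => s i ω)
      (fun ω => fun p : I × ℕ => r p.1 p.2 ω) P)
    (hspos : ∀ i, 0 < ∫ ω, (s i ω : ℝ) ∂P)
    (hsint : ∀ i, Integrable (fun ω => (s i ω : ℝ)) P)
    (hs2pos : ∀ i, 0 < ∫ ω, ((s i ω * (s i ω - 1) : ℕ) : ℝ) ∂P)
    (hs2int : ∀ i, Integrable (fun ω => ((s i ω * (s i ω - 1) : ℕ) : ℝ)) P)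
    (Ehat Qhat : I → Ω → ℝ) (Lhat : Ω → ℝ)
    (hEhat : ∀ i ω, Ehat i ω = (∫ ω', (s i ω' : ℝ) ∂P)⁻¹ *
      ∑ k ∈ Finset.range (s i ω), r i k ω)
    (hQhat : ∀ i ω, Qhat i ω = (∫ ω', ((s i ω' * (s i ω' - 1) : ℕ) : ℝ) ∂P)⁻¹ *
      ∑ k ∈ Finset.range (s i ω), ∑ k' ∈ (Finset.range (s i ω)).erase k,
        r i k ω * r i k' ω)
    (hLhat : ∀ ω, Lhat ω = ∑ i, p i * ((y i) ^ 2 - 2 * y i * Ehat i ω + Qhat i ω)) :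
    ∫ ω, Lhat ω ∂P = ∑ i, p i * (y i - μ i) ^ 2 := by
  have hmain : ∀ i, (Integrable (Ehat i) P ∧ ∫ ω, Ehat i ω ∂P = μ i) ∧
      (Integrable (Qhat i) P ∧ ∫ ω, Qhat i ω ∂P = μ i ^ 2) := by
    intro i
    obtain ⟨C, hC⟩ := hrbdd i
    set D := |C| with hDdef
    have hD : ∀ k ω, |r i k ω| ≤ D := fun k ω => (hC k ω).trans (le_abs_self C)
    have hD0 : 0 ≤ D := abs_nonneg C
    have hrint : ∀ k, Integrable (r i k) P := by
      intro k
      refine (integrable_const D).mono' (hrmeas i k).aestronglyMeasurable ?_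
      exact Filter.Eventually.of_forall fun ω => by simpa [Real.norm_eq_abs] using hD k ω
    -- independence helper
    have hindicomp : ∀ (n : ℕ) (ψ : (I × ℕ → ℝ) → ℝ), Measurable ψ →
        IndepFun (fun ω => if s i ω = n then (1:ℝ) else 0)
          (fun ω => ψ (fun q : I × ℕ => r q.1 q.2 ω)) P := by
      intro n ψ hψ
      have hφm : Measurable (fun v : I → ℕ => if v i = n then (1:ℝ) else 0) := by
        have hset : MeasurableSet ((fun v : I → ℕ => v i) ⁻¹' {n}) :=
          measurable_pi_apply i (measurableSet_singleton n)
        exact Measurable.ite hset measurable_const measurable_const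
      exact hsindep.comp hφm hψ
    -- First part: Ehat
    have key1 := key_lemma P (s i) (hsmeas i) (fun n => n) (hsint i)
      (fun n ω => ∑ k ∈ Finset.range n, r i k ω)
      (fun n => Finset.measurable_sum _ (fun k _ => hrmeas i k))
      D
      (fun n ω => by
        calc |∑ k ∈ Finset.range n, r i k ω| ≤ ∑ k ∈ Finset.range n, |r i k ω| :=
              Finset.abs_sum_le_sum_abs _ _
          _ ≤ ∑ k ∈ Finset.range n, D := Finset.sum_le_sum (fun k _ => hD k ω)
          _ = D * n := by simp [mul_comm])
      (μ i)
      (fun n => by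
        rw [integral_finset_sum _ (fun k _ => hrint k)]
        simp [hrmean i, mul_comm])
      (fun n => by
        have := hindicomp n (fun w => ∑ k ∈ Finset.range n, w (i, k))
          (Finset.measurable_sum _ (fun k _ => measurable_pi_apply (i, k)))
        exact this)
    have hEeq : Ehat i = fun ω => (∫ ω', (s i ω' : ℝ) ∂P)⁻¹ *
        ∑ k ∈ Finset.range (s i ω), r i k ω := funext (hEhat i)
    have hEint : Integrable (Ehat i) P := by
      rw [hEeq]; exact key1.1.const_mul _
    have hEmean : ∫ ω, Ehat i ω ∂P = μ i := by
      rw [hEeq]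
      rw [integral_const_mul, key1.2, mul_comm (μ i)]
      exact inv_mul_cancel_left₀ (hspos i).ne' _
    -- Second part: Qhat
    have hprodint : ∀ k k', Integrable (fun ω => r i k ω * r i k' ω) P := by
      intro k k'
      refine (integrable_const (D * D)).mono'
        ((hrmeas i k).mul (hrmeas i k')).aestronglyMeasurable ?_
      refine Filter.Eventually.of_forall fun ω => ?_
      rw [Real.norm_eq_abs, abs_mul]
      exact mul_le_mul (hD k ω) (hD k' ω) (abs_nonneg _) hD0
    have hprodmean : ∀ k k', k ≠ k' → ∫ ω, r i k ω * r i k' ω ∂P = μ i ^ 2 := by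
      intro k k' hkk'
      have hne : ((i, k) : I × ℕ) ≠ (i, k') := fun h => hkk' (congrArg Prod.snd h)
      have hi : IndepFun (r i k) (r i k') P := hrindep.indepFun hne
      rw [hi.integral_fun_mul_eq_mul_integral (hrmeas i k).aestronglyMeasurable
        (hrmeas i k').aestronglyMeasurable, hrmean i k, hrmean i k']
      ring
    have key2 := key_lemma P (s i) (hsmeas i) (fun n => n * (n - 1)) (hs2int i)
      (fun n ω => ∑ k ∈ Finset.range n, ∑ k' ∈ (Finset.range n).erase k,
        r i k ω * r i k' ω)
      (fun n => Finset.measurable_sum _ (fun k _ =>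
        Finset.measurable_sum _ (fun k' _ => (hrmeas i k).mul (hrmeas i k'))))
      (D * D)
      (fun n ω => by
        calc |∑ k ∈ Finset.range n, ∑ k' ∈ (Finset.range n).erase k, r i k ω * r i k' ω|
            ≤ ∑ k ∈ Finset.range n, |∑ k' ∈ (Finset.range n).erase k, r i k ω * r i k' ω| :=
              Finset.abs_sum_le_sum_abs _ _
          _ ≤ ∑ k ∈ Finset.range n, ∑ k' ∈ (Finset.range n).erase k, |r i k ω * r i k' ω| :=
              Finset.sum_le_sum (fun k _ => Finset.abs_sum_le_sum_abs _ _)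
          _ ≤ ∑ k ∈ Finset.range n, ∑ k' ∈ (Finset.range n).erase k, D * D := by
              refine Finset.sum_le_sum fun k _ => Finset.sum_le_sum fun k' _ => ?_
              rw [abs_mul]
              exact mul_le_mul (hD k ω) (hD k' ω) (abs_nonneg _) hD0
          _ = D * D * (n * (n - 1) : ℕ) := by
              have hcongr : ∀ k ∈ Finset.range n,
                  (∑ _k' ∈ (Finset.range n).erase k, D * D) = ((n - 1 : ℕ) : ℝ) * (D * D) := by
                intro k hk
                rw [Finset.sum_const, Finset.card_erase_of_mem hk, Finset.card_range,
                  nsmul_eq_mul]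
              rw [Finset.sum_congr rfl hcongr, Finset.sum_const, Finset.card_range,
                nsmul_eq_mul, Nat.cast_mul]
              ring)
      (μ i ^ 2)
      (fun n => by
        rw [integral_finset_sum _ (fun k _ => integrable_finset_sum _
          (fun k' _ => hprodint k k'))]
        have hstep : ∀ k ∈ Finset.range n,
            (∫ ω, ∑ k' ∈ (Finset.range n).erase k, r i k ω * r i k' ω ∂P)
              = ((n - 1 : ℕ) : ℝ) * μ i ^ 2 := by
          intro k hk
          rw [integral_finset_sum _ (fun k' _ => hprodint k k')]
          rw [Finset.sum_congr rfl (fun k' hk' =>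
            hprodmean k k' (Finset.ne_of_mem_erase hk').symm)]
          rw [Finset.sum_const, Finset.card_erase_of_mem hk, Finset.card_range, nsmul_eq_mul]
        rw [Finset.sum_congr rfl hstep, Finset.sum_const, Finset.card_range, nsmul_eq_mul,
          Nat.cast_mul]
        ring)
      (fun n => by
        have := hindicomp n (fun w => ∑ k ∈ Finset.range n,
          ∑ k' ∈ (Finset.range n).erase k, w (i, k) * w (i, k'))
          (Finset.measurable_sum _ (fun k _ => Finset.measurable_sum _
            (fun k' _ => (measurable_pi_apply (i, k)).mul (measurable_pi_apply (i, k')))))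
        exact this)
    have hQeq : Qhat i = fun ω => (∫ ω', ((s i ω' * (s i ω' - 1) : ℕ) : ℝ) ∂P)⁻¹ *
        ∑ k ∈ Finset.range (s i ω), ∑ k' ∈ (Finset.range (s i ω)).erase k,
          r i k ω * r i k' ω := funext (hQhat i)
    have hQint : Integrable (Qhat i) P := by
      rw [hQeq]; exact key2.1.const_mul _
    have hQmean : ∫ ω, Qhat i ω ∂P = μ i ^ 2 := by
      rw [hQeq]
      rw [integral_const_mul, key2.2, mul_comm (μ i ^ 2)]
      exact inv_mul_cancel_left₀ (hs2pos i).ne' _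
    exact ⟨⟨hEint, hEmean⟩, ⟨hQint, hQmean⟩⟩
  -- conclude
  have hterm : ∀ i : I, Integrable (fun ω => p i * ((y i) ^ 2 - 2 * y i * Ehat i ω + Qhat i ω)) P := by
    intro i
    refine Integrable.const_mul ?_ (p i)
    refine Integrable.add ?_ (hmain i).2.1
    refine Integrable.sub (integrable_const _) ?_
    simpa [mul_assoc] using ((hmain i).1.1.const_mul (2 * y i))
  calc ∫ ω, Lhat ω ∂P = ∫ ω, ∑ i, p i * ((y i) ^ 2 - 2 * y i * Ehat i ω + Qhat i ω) ∂P :=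
        integral_congr_ae (Filter.Eventually.of_forall fun ω => hLhat ω)
    _ = ∑ i, ∫ ω, p i * ((y i) ^ 2 - 2 * y i * Ehat i ω + Qhat i ω) ∂P :=
        integral_finset_sum _ (fun i _ => hterm i)
    _ = ∑ i, p i * (y i - μ i) ^ 2 := by
        refine Finset.sum_congr rfl fun i _ => ?_
        have hE2 : Integrable (fun ω => 2 * y i * Ehat i ω) P := by
          simpa [mul_assoc] using ((hmain i).1.1.const_mul (2 * y i))
        have hint1 : Integrable (fun ω => y i ^ 2 - 2 * y i * Ehat i ω) P :=
          (integrable_const _).sub hE2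
        rw [integral_const_mul, integral_add hint1 (hmain i).2.1,
          integral_sub (integrable_const _) hE2, integral_const_mul, (hmain i).1.2,
          (hmain i).2.2, integral_const]
        simp only [measure_univ, probReal_univ, ENNReal.toReal_one, one_smul, smul_eq_mul]
        ring
end

section
/- (Proposition 4, Appendix E: unbiased estimator for the full mean-squared-error loss with decomposed measurement operators.) Let I and J be finite index sets. For each i ∈ I let p_i ∈ ℝ be a weight and y_i ∈ ℝ a label; for each (i,j) ∈ I×J let c_{i,j} ∈ ℝ be a coefficient and μ_{i,j} ∈ ℝ a target expectation value. For each (i,j) let (r_{i,j,k})_{k≥1} be a sequence of i.i.d. bounded real random variables with mean μ_{i,j}, the sequences for distinct pairs (i,j) being mutually independent. Let (s_{i,j})_{(i,j)∈I×J} be a family of ℕ-valued random variables, jointly independent of all outcome sequences, with E[s_{i,j}] > 0, E[s_{i,j} s_{i,j'}] ∈ (0,∞) for j ≠ j', and E[s_{i,j}(s_{i,j}−1)] ∈ (0,∞) for all i,j. Define Ê_{i,j} = (1/E[s_{i,j}]) Σ_{k=1}^{s_{i,j}} r_{i,j,k}; for j ≠ j', Q̂_{i,j,j'} = (1/E[s_{i,j}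 s_{i,j'}]) Σ_{k=1}^{s_{i,j}} Σ_{k'=1}^{s_{i,j'}} r_{i,j,k} r_{i,j',k'}; and Q̂_{i,j} = (1/E[s_{i,j}(s_{i,j}−1)]) Σ_{1≤k,k'≤s_{i,j}, k≠k'} r_{i,j,k} r_{i,j,k'}. Define the estimator L̂′ = Σ_i p_i y_i² − 2 Σ_{i,j} p_i y_i c_{i,j} Ê_{i,j} + Σ_{i} Σ_{j≠j'} p_i c_{i,j} c_{i,j'} Q̂_{i,j,j'} + Σ_{i,j} p_i c_{i,j}² Q̂_{i,j}. Then E[L̂′] = Σ_{i∈I} p_i (y_i − Σ_{j∈J} c_{i,j} μ_{i,j})². -/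
open MeasureTheory ProbabilityTheory

open scoped ENNReal NNReal

private lemma count_pairs (n : ℕ) (cst : ℝ) :
    (∑ k ∈ Finset.range n, ∑ k' ∈ (Finset.range n).erase k, cst)
      = ((n * (n - 1) : ℕ) : ℝ) * cst := by
  have h1 : ∀ k ∈ Finset.range n,
      (∑ _k' ∈ (Finset.range n).erase k, cst) = ((n - 1 : ℕ) : ℝ) * cst := fun k hk => by
    rw [Finset.sum_const, Finset.card_erase_of_mem hk, Finset.card_range, nsmul_eq_mul]
  rw [Finset.sum_congr rfl h1, Finset.sum_const, Finset.card_range, nsmul_eq_mul,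
    Nat.cast_mul]
  ring

private lemma indicator_tsum_key {Ω : Type*} [MeasurableSpace Ω] (P : Measure Ω)
    [IsProbabilityMeasure P] {κ : Type*} [Countable κ]
    (W X : κ → Ω → ℝ) (C μ0 : ℝ) (S : Ω → ℝ)
    (hW01 : ∀ k ω, W k ω = 0 ∨ W k ω = 1)
    (hWmeas : ∀ k, Measurable (W k))
    (hXmeas : ∀ k, Measurable (X k))
    (hXbdd : ∀ k ω, |X k ω| ≤ C)
    (hindep : ∀ k, IndepFun (W k) (X k) P)
    (hmean : ∀ k, ∫ ω, X k ω ∂P = μ0)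
    (hS : ∀ ω, S ω = ∑' k, W k ω)
    (hfin : ∀ ω, ∃ F : Finset κ, ∀ k ∉ F, W k ω = 0)
    (hSint : Integrable S P) :
    ∫ ω, (∑' k, W k ω * X k ω) ∂P = μ0 * ∫ ω, S ω ∂P := by
  have hWn : ∀ k ω, 0 ≤ W k ω := fun k ω => by rcases hW01 k ω with h | h <;> simp [h]
  have hW1 : ∀ k ω, W k ω ≤ 1 := fun k ω => by rcases hW01 k ω with h | h <;> simp [h]
  have hnn : ∀ k ω, (‖W k ω‖₊ : ℝ≥0∞) = ENNReal.ofReal (W k ω) := fun k ω => by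
    rw [← enorm_eq_nnnorm, ← ofReal_norm, Real.norm_of_nonneg (hWn k ω)]
  have hWsummable : ∀ ω, Summable fun k => W k ω := fun ω => by
    obtain ⟨F, hF⟩ := hfin ω
    exact summable_of_ne_finset_zero hF
  have key : (∑' k, ∫⁻ ω, (‖W k ω‖₊ : ℝ≥0∞) ∂P) < ∞ := by
    rw [← lintegral_tsum fun k => (hWmeas k).nnnorm.coe_nnreal_ennreal.aemeasurable]
    have hpt : ∀ ω, (∑' k, (‖W k ω‖₊ : ℝ≥0∞)) = ENNReal.ofReal (S ω) := by
      intro ω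
      simp only [hnn]
      rw [hS ω, ENNReal.ofReal_tsum_of_nonneg (fun k => hWn k ω) (hWsummable ω)]
    calc ∫⁻ ω, (∑' k, (‖W k ω‖₊ : ℝ≥0∞)) ∂P = ∫⁻ ω, ENNReal.ofReal (S ω) ∂P :=
          lintegral_congr hpt
      _ < ∞ := hSint.lintegral_lt_top
  have hWint : ∀ k, Integrable (W k) P := fun k =>
    Integrable.mono' (integrable_const 1) (hWmeas k).aestronglyMeasurable
      (ae_of_all _ fun ω => by rw [Real.norm_of_nonneg (hWn k ω)]; exact hW1 k ω)
  have hXint : ∀ k, Integrable (X k) P := fun k =>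
    Integrable.mono' (integrable_const C) (hXmeas k).aestronglyMeasurable
      (ae_of_all _ fun ω => by rw [Real.norm_eq_abs]; exact hXbdd k ω)
  have hprod : ∀ k, ∫ ω, W k ω * X k ω ∂P = (∫ ω, W k ω ∂P) * μ0 := by
    intro k
    rw [← hmean k]
    exact (hindep k).integral_mul_eq_mul_integral (hWint k).aestronglyMeasurable
      (hXint k).aestronglyMeasurable
  have hfin2 : (∑' k, ∫⁻ ω, ‖W k ω * X k ω‖₊ ∂P) ≠ ∞ := by
    have hb : ∀ k, (∫⁻ ω, ‖W k ω * X k ω‖₊ ∂P)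
        ≤ ENNReal.ofReal C * ∫⁻ ω, (‖W k ω‖₊ : ℝ≥0∞) ∂P := by
      intro k
      rw [← lintegral_const_mul _ (hWmeas k).nnnorm.coe_nnreal_ennreal]
      refine lintegral_mono fun ω => ?_
      calc (‖W k ω * X k ω‖₊ : ℝ≥0∞) = (‖W k ω‖₊ : ℝ≥0∞) * (‖X k ω‖₊ : ℝ≥0∞) := by
            rw [nnnorm_mul]; push_cast; ring
        _ ≤ (‖W k ω‖₊ : ℝ≥0∞) * ENNReal.ofReal C := by
            gcongr
            rw [← enorm_eq_nnnorm, ← ofReal_norm]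
            exact ENNReal.ofReal_le_ofReal (by rw [Real.norm_eq_abs]; exact hXbdd k ω)
        _ = ENNReal.ofReal C * (‖W k ω‖₊ : ℝ≥0∞) := mul_comm _ _
    refine ne_of_lt (lt_of_le_of_lt (ENNReal.tsum_le_tsum hb) ?_)
    rw [ENNReal.tsum_mul_left]
    exact ENNReal.mul_lt_top ENNReal.ofReal_lt_top key
  have hmeas2 : ∀ k, AEStronglyMeasurable (fun ω => W k ω * X k ω) P :=
    fun k => ((hWmeas k).mul (hXmeas k)).aestronglyMeasurable
  rw [integral_tsum hmeas2 hfin2]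
  simp_rw [hprod]
  rw [tsum_mul_right]
  have hS' : ∫ ω, S ω ∂P = ∑' k, ∫ ω, W k ω ∂P :=
    calc ∫ ω, S ω ∂P = ∫ ω, (∑' k, W k ω) ∂P := integral_congr_ae (ae_of_all _ hS)
      _ = ∑' k, ∫ ω, W k ω ∂P :=
          integral_tsum (fun k => (hWmeas k).aestronglyMeasurable) key.ne
  rw [hS', mul_comm]
section walds
variable {Ω : Type*} [MeasurableSpace Ω] (P : Measure Ω) [IsProbabilityMeasure P]

private lemma wald1 (s : Ω → ℕ) (r : ℕ → Ω → ℝ) (C μ0 : ℝ)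
    (hs : Measurable s) (hsint : Integrable (fun ω => (s ω : ℝ)) P)
    (hr : ∀ k, Measurable (r k)) (hrb : ∀ k ω, |r k ω| ≤ C)
    (hmean : ∀ k, ∫ ω, r k ω ∂P = μ0)
    (hind : ∀ k, IndepFun s (r k) P) :
    ∫ ω, (∑ k ∈ Finset.range (s ω), r k ω) ∂P = μ0 * ∫ ω, (s ω : ℝ) ∂P := by
  classical
  set W : ℕ → Ω → ℝ := fun k ω => if k < s ω then 1 else 0 with hWdef
  have hvan : ∀ ω k, k ∉ Finset.range (s ω) → W k ω = 0 := by
    intro ω k hk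
    have h : ¬ k < s ω := by simpa using hk
    simp [hWdef, h]
  have hsum : ∀ ω, (∑' k, W k ω * r k ω) = ∑ k ∈ Finset.range (s ω), r k ω := by
    intro ω
    rw [tsum_eq_sum (s := Finset.range (s ω))
      (fun k hk => by rw [hvan ω k hk, zero_mul])]
    exact Finset.sum_congr rfl fun k hk => by simp [hWdef, Finset.mem_range.mp hk]
  have hScast : ∀ ω, ((s ω : ℝ)) = ∑' k, W k ω := by
    intro ω
    rw [tsum_eq_sum (s := Finset.range (s ω)) (hvan ω)]
    have h1 : ∀ k ∈ Finset.range (s ω), W k ω = 1 := fun k hk => by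
      simp [hWdef, Finset.mem_range.mp hk]
    rw [Finset.sum_congr rfl h1]
    simp
  calc ∫ ω, (∑ k ∈ Finset.range (s ω), r k ω) ∂P
      = ∫ ω, (∑' k, W k ω * r k ω) ∂P :=
        integral_congr_ae (ae_of_all _ fun ω => (hsum ω).symm)
    _ = μ0 * ∫ ω, (s ω : ℝ) ∂P := by
        refine indicator_tsum_key P W r C μ0 (fun ω => (s ω : ℝ))
          (fun k ω => by simp only [hWdef]; split <;> simp)
          (fun k => (measurable_of_countable
            (fun n : ℕ => if k < n then (1:ℝ) else 0)).comp hs)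
          hr hrb
          (fun k => (hind k).comp
            (measurable_of_countable (fun n : ℕ => if k < n then (1:ℝ) else 0))
            measurable_id)
          hmean hScast
          (fun ω => ⟨Finset.range (s ω), hvan ω⟩)
          hsint

private lemma wald2 (s t : Ω → ℕ) (a b : ℕ → Ω → ℝ) (Ca Cb m : ℝ)
    (hCa : 0 ≤ Ca) (hCb : 0 ≤ Cb)
    (hs : Measurable s) (ht : Measurable t)
    (hstint : Integrable (fun ω => ((s ω * t ω : ℕ) : ℝ)) P)
    (ha : ∀ k, Measurable (a k)) (hb : ∀ k, Measurable (b k))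
    (hab : ∀ k ω, |a k ω| ≤ Ca) (hbb : ∀ k ω, |b k ω| ≤ Cb)
    (hm : ∀ k k', ∫ ω, a k ω * b k' ω ∂P = m)
    (hind : ∀ k k', IndepFun (fun ω => (s ω, t ω)) (fun ω => (a k ω, b k' ω)) P) :
    ∫ ω, (∑ k ∈ Finset.range (s ω), ∑ k' ∈ Finset.range (t ω), a k ω * b k' ω) ∂P
      = m * ∫ ω, ((s ω * t ω : ℕ) : ℝ) ∂P := by
  classical
  set W : ℕ × ℕ → Ω → ℝ := fun q ω => if q.1 < s ω ∧ q.2 < t ω then 1 else 0 with hWdef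
  set X : ℕ × ℕ → Ω → ℝ := fun q ω => a q.1 ω * b q.2 ω with hXdef
  have hvan : ∀ ω q, q ∉ Finset.range (s ω) ×ˢ Finset.range (t ω) → W q ω = 0 := by
    intro ω q hq
    have h : ¬ (q.1 < s ω ∧ q.2 < t ω) := by
      simpa [Finset.mem_product] using hq
    simp [hWdef, h]
  have hsum : ∀ ω, (∑' q : ℕ × ℕ, W q ω * X q ω)
      = ∑ k ∈ Finset.range (s ω), ∑ k' ∈ Finset.range (t ω), a k ω * b k' ω := by
    intro ω
    rw [tsum_eq_sum (s := Finset.range (s ω) ×ˢ Finset.range (t ω))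
      (fun q hq => by rw [hvan ω q hq, zero_mul]), Finset.sum_product]
    refine Finset.sum_congr rfl fun k hk => Finset.sum_congr rfl fun k' hk' => ?_
    simp [hWdef, hXdef, Finset.mem_range.mp hk, Finset.mem_range.mp hk']
  have hScast : ∀ ω, ((s ω * t ω : ℕ) : ℝ) = ∑' q : ℕ × ℕ, W q ω := by
    intro ω
    rw [tsum_eq_sum (s := Finset.range (s ω) ×ˢ Finset.range (t ω)) (hvan ω)]
    have h1 : ∀ q ∈ Finset.range (s ω) ×ˢ Finset.range (t ω), W q ω = 1 := by
      intro q hq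
      have h := Finset.mem_product.mp hq
      simp [hWdef, Finset.mem_range.mp h.1, Finset.mem_range.mp h.2]
    rw [Finset.sum_congr rfl h1]
    simp [Finset.card_product]
  calc ∫ ω, (∑ k ∈ Finset.range (s ω), ∑ k' ∈ Finset.range (t ω), a k ω * b k' ω) ∂P
      = ∫ ω, (∑' q : ℕ × ℕ, W q ω * X q ω) ∂P :=
        integral_congr_ae (ae_of_all _ fun ω => (hsum ω).symm)
    _ = m * ∫ ω, ((s ω * t ω : ℕ) : ℝ) ∂P := by
        refine indicator_tsum_key P W X (Ca * Cb) m (fun ω => ((s ω * t ω : ℕ) : ℝ))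
          (fun q ω => by simp only [hWdef]; split <;> simp)
          (fun q => (measurable_of_countable
            (fun n : ℕ × ℕ => if q.1 < n.1 ∧ q.2 < n.2 then (1:ℝ) else 0)).comp
            (hs.prodMk ht))
          (fun q => (ha q.1).mul (hb q.2))
          (fun q ω => by
            rw [hXdef]
            calc |a q.1 ω * b q.2 ω| = |a q.1 ω| * |b q.2 ω| := abs_mul _ _
              _ ≤ Ca * Cb := mul_le_mul (hab q.1 ω) (hbb q.2 ω) (abs_nonneg _) hCa)
          (fun q => (hind q.1 q.2).comp
            (measurable_of_countable
              (fun n : ℕ × ℕ => if q.1 < n.1 ∧ q.2 < n.2 then (1:ℝ) else 0))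
            measurable_mul)
          (fun q => hm q.1 q.2) hScast
          (fun ω => ⟨Finset.range (s ω) ×ˢ Finset.range (t ω), hvan ω⟩)
          hstint

private lemma wald3 (s : Ω → ℕ) (a : ℕ → Ω → ℝ) (Ca m : ℝ) (hCa : 0 ≤ Ca)
    (hs : Measurable s)
    (hs2int : Integrable (fun ω => ((s ω * (s ω - 1) : ℕ) : ℝ)) P)
    (ha : ∀ k, Measurable (a k)) (hab : ∀ k ω, |a k ω| ≤ Ca)
    (hm : ∀ k k', k ≠ k' → ∫ ω, a k ω * a k' ω ∂P = m)
    (hind : ∀ k k', IndepFun s (fun ω => (a k ω, a k' ω)) P) :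
    ∫ ω, (∑ k ∈ Finset.range (s ω),
        ∑ k' ∈ (Finset.range (s ω)).erase k, a k ω * a k' ω) ∂P
      = m * ∫ ω, ((s ω * (s ω - 1) : ℕ) : ℝ) ∂P := by
  classical
  set W : {q : ℕ × ℕ // q.1 ≠ q.2} → Ω → ℝ :=
    fun q ω => if q.1.1 < s ω ∧ q.1.2 < s ω then 1 else 0 with hWdef
  set X : {q : ℕ × ℕ // q.1 ≠ q.2} → Ω → ℝ :=
    fun q ω => a q.1.1 ω * a q.1.2 ω with hXdef
  set F : ℕ → Finset {q : ℕ × ℕ // q.1 ≠ q.2} :=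
    fun n => (Finset.range n ×ˢ Finset.range n).subtype (fun q => q.1 ≠ q.2) with hFdef
  have hgen : ∀ (n : ℕ) (g : ℕ → ℕ → ℝ),
      (∑ q ∈ F n, g q.1.1 q.1.2)
        = ∑ k ∈ Finset.range n, ∑ k' ∈ (Finset.range n).erase k, g k k' := by
    intro n g
    calc (∑ q ∈ F n, g q.1.1 q.1.2)
        = ∑ q ∈ (Finset.range n ×ˢ Finset.range n).filter (fun q => q.1 ≠ q.2),
            g q.1 q.2 := Finset.sum_subtype_eq_sum_filter (fun q : ℕ × ℕ => g q.1 q.2)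
      _ = ∑ q ∈ Finset.range n ×ˢ Finset.range n,
            if q.1 ≠ q.2 then g q.1 q.2 else 0 := Finset.sum_filter _ _
      _ = ∑ k ∈ Finset.range n, ∑ k' ∈ Finset.range n,
            if k ≠ k' then g k k' else 0 := Finset.sum_product _ _ _
      _ = ∑ k ∈ Finset.range n, ∑ k' ∈ (Finset.range n).erase k, g k k' := by
          refine Finset.sum_congr rfl fun k _ => ?_
          rw [← Finset.sum_filter, Finset.filter_ne]
  have hvan : ∀ ω q, q ∉ F (s ω) → W q ω = 0 := by
    intro ω q hq
    have h : ¬ (q.1.1 < s ω ∧ q.1.2 < s ω) := by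
      simpa [hFdef, Finset.mem_subtype, Finset.mem_product] using hq
    simp [hWdef, h]
  have hsum : ∀ ω, (∑' q, W q ω * X q ω)
      = ∑ k ∈ Finset.range (s ω), ∑ k' ∈ (Finset.range (s ω)).erase k,
          a k ω * a k' ω := by
    intro ω
    rw [tsum_eq_sum (s := F (s ω)) (fun q hq => by rw [hvan ω q hq, zero_mul])]
    rw [← hgen (s ω) (fun k k' => a k ω * a k' ω)]
    refine Finset.sum_congr rfl fun q hq => ?_
    have h : q.1.1 < s ω ∧ q.1.2 < s ω := by
      have := Finset.mem_subtype.mp hq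
      have h2 := Finset.mem_product.mp this
      exact ⟨Finset.mem_range.mp h2.1, Finset.mem_range.mp h2.2⟩
    simp [hWdef, hXdef, h.1, h.2]
  have hScast : ∀ ω, ((s ω * (s ω - 1) : ℕ) : ℝ) = ∑' q, W q ω := by
    intro ω
    rw [tsum_eq_sum (s := F (s ω)) (hvan ω)]
    have h1 : ∀ q ∈ F (s ω), W q ω = 1 := by
      intro q hq
      have := Finset.mem_product.mp (Finset.mem_subtype.mp hq)
      simp [hWdef, Finset.mem_range.mp this.1, Finset.mem_range.mp this.2]
    rw [Finset.sum_congr rfl h1]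
    have := hgen (s ω) (fun _ _ => (1:ℝ))
    rw [this, count_pairs, mul_one]
  calc ∫ ω, (∑ k ∈ Finset.range (s ω),
        ∑ k' ∈ (Finset.range (s ω)).erase k, a k ω * a k' ω) ∂P
      = ∫ ω, (∑' q, W q ω * X q ω) ∂P :=
        integral_congr_ae (ae_of_all _ fun ω => (hsum ω).symm)
    _ = m * ∫ ω, ((s ω * (s ω - 1) : ℕ) : ℝ) ∂P := by
        refine indicator_tsum_key P W X (Ca * Ca) m
          (fun ω => ((s ω * (s ω - 1) : ℕ) : ℝ))
          (fun q ω => by simp only [hWdef]; split <;> simp)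
          (fun q => (measurable_of_countable
            (fun n : ℕ => if q.1.1 < n ∧ q.1.2 < n then (1:ℝ) else 0)).comp hs)
          (fun q => (ha q.1.1).mul (ha q.1.2))
          (fun q ω => by
            rw [hXdef]
            calc |a q.1.1 ω * a q.1.2 ω| = |a q.1.1 ω| * |a q.1.2 ω| := abs_mul _ _
              _ ≤ Ca * Ca := mul_le_mul (hab _ ω) (hab _ ω) (abs_nonneg _) hCa)
          (fun q => (hind q.1.1 q.1.2).comp
            (measurable_of_countable
              (fun n : ℕ => if q.1.1 < n ∧ q.1.2 < n then (1:ℝ) else 0))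
            measurable_mul)
          (fun q => hm q.1.1 q.1.2 q.2) hScast
          (fun ω => ⟨F (s ω), hvan ω⟩)
          hs2int

end walds
set_option maxHeartbeats 1000000 in
/-- **Proposition 4 (Appendix E): unbiased estimator for the full MSE loss with decomposed
measurement operators.** With weights `p i`, labels `y i`, coefficients `c i j` and target
expectations `μ i j`, i.i.d. bounded outcome sequences `(r i j k)` of mean `μ i j` (mutually
independent across distinct pairs `(i,j)`), and shot counts `(s i j)` jointly independent of
all outcomes, the estimator
`L̂' = ∑ i, p i (y i)² - 2 ∑ i j, p i * y i * c i j * Ê i j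
  + ∑ i, ∑ j ≠ j', p i * c i j * c i j' * Q̂ i j j' + ∑ i j, p i * (c i j)² * Q̂ i j`
satisfies `E[L̂'] = ∑ i, p i * (y i - ∑ j, c i j * μ i j)²`. -/
theorem unbiased_estimator_full_mse
    {Ω : Type*} [MeasurableSpace Ω] (P : Measure Ω) [IsProbabilityMeasure P]
    {I : Type*} [Fintype I] {J : Type*} [Fintype J] [DecidableEq J]
    (p y : I → ℝ) (c μ : I → J → ℝ)
    (r : I → J → ℕ → Ω → ℝ) (s : I → J → Ω → ℕ)
    (hrmeas : ∀ i j k, Measurable (r i j k))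
    (hrbdd : ∀ i j, ∃ C, ∀ k ω, |r i j k ω| ≤ C)
    (hrindep : iIndepFun
      (fun q : (I × J) × ℕ => r q.1.1 q.1.2 q.2) P)
    (hrident : ∀ i j k, IdentDistrib (r i j k) (r i j 0) P P)
    (hrmean : ∀ i j k, ∫ ω, r i j k ω ∂P = μ i j)
    (hsmeas : ∀ i j, Measurable (s i j))
    (hsindep : IndepFun (fun ω => fun q : I × J => s q.1 q.2 ω)
      (fun ω => fun q : (I × J) × ℕ => r q.1.1 q.1.2 q.2 ω) P)
    (hspos : ∀ i j, 0 < ∫ ω, (s i j ω : ℝ) ∂P)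
    (hsint : ∀ i j, Integrable (fun ω => (s i j ω : ℝ)) P)
    (hscrosspos : ∀ i j j', j ≠ j' → 0 < ∫ ω, ((s i j ω * s i j' ω : ℕ) : ℝ) ∂P)
    (hscrossint : ∀ i j j', j ≠ j' →
      Integrable (fun ω => ((s i j ω * s i j' ω : ℕ) : ℝ)) P)
    (hs2pos : ∀ i j, 0 < ∫ ω, ((s i j ω * (s i j ω - 1) : ℕ) : ℝ) ∂P)
    (hs2int : ∀ i j, Integrable (fun ω => ((s i j ω * (s i j ω - 1) : ℕ) : ℝ)) P)
    (Ehat : I → J → Ω → ℝ) (Qcross : I → J → J → Ω → ℝ) (Qhat : I → J → Ω → ℝ)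
    (Lhat : Ω → ℝ)
    (hEhat : ∀ i j ω, Ehat i j ω = (∫ ω', (s i j ω' : ℝ) ∂P)⁻¹ *
      ∑ k ∈ Finset.range (s i j ω), r i j k ω)
    (hQcross : ∀ i j j' ω, j ≠ j' → Qcross i j j' ω =
      (∫ ω', ((s i j ω' * s i j' ω' : ℕ) : ℝ) ∂P)⁻¹ *
        ∑ k ∈ Finset.range (s i j ω), ∑ k' ∈ Finset.range (s i j' ω),
          r i j k ω * r i j' k' ω)
    (hQhat : ∀ i j ω, Qhat i j ω =
      (∫ ω', ((s i j ω' * (s i j ω' - 1) : ℕ) : ℝ) ∂P)⁻¹ *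
        ∑ k ∈ Finset.range (s i j ω), ∑ k' ∈ (Finset.range (s i j ω)).erase k,
          r i j k ω * r i j k' ω)
    (hLhat : ∀ ω, Lhat ω =
      (∑ i, p i * (y i) ^ 2) - 2 * (∑ i, ∑ j, p i * y i * c i j * Ehat i j ω) +
        (∑ i, ∑ j, ∑ j' ∈ Finset.univ.erase j,
          p i * c i j * c i j' * Qcross i j j' ω) +
        ∑ i, ∑ j, p i * (c i j) ^ 2 * Qhat i j ω) :
    ∫ ω, Lhat ω ∂P = ∑ i, p i * (y i - ∑ j, c i j * μ i j) ^ 2 := by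
  classical
  -- nonnegative uniform bounds
  have hrb' : ∀ i j, ∃ C, 0 ≤ C ∧ ∀ k ω, |r i j k ω| ≤ C := fun i j => by
    obtain ⟨C, hC⟩ := hrbdd i j
    exact ⟨|C|, abs_nonneg C, fun k ω => (hC k ω).trans (le_abs_self C)⟩
  choose Cb hCb0 hCbb using hrb'
  -- independence of shot counts and outcomes, specialized
  have hind1 : ∀ i j k, IndepFun (s i j) (r i j k) P := fun i j k =>
    hsindep.comp (measurable_pi_apply (i, j)) (measurable_pi_apply ((i, j), k))
  have hind2 : ∀ i j j' k k', IndepFun (fun ω => (s i j ω, s i j' ω))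
      (fun ω => (r i j k ω, r i j' k' ω)) P := fun i j j' k k' =>
    hsindep.comp ((measurable_pi_apply (i, j)).prodMk (measurable_pi_apply (i, j')))
      ((measurable_pi_apply ((i, j), k)).prodMk (measurable_pi_apply ((i, j'), k')))
  have hind3 : ∀ i j k k', IndepFun (s i j)
      (fun ω => (r i j k ω, r i j k' ω)) P := fun i j k k' =>
    hsindep.comp (measurable_pi_apply (i, j))
      ((measurable_pi_apply ((i, j), k)).prodMk (measurable_pi_apply ((i, j), k')))
  -- product means for distinct outcome indices
  have hprodmean : ∀ (q q' : (I × J) × ℕ), q ≠ q' →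
      ∫ ω, r q.1.1 q.1.2 q.2 ω * r q'.1.1 q'.1.2 q'.2 ω ∂P
        = μ q.1.1 q.1.2 * μ q'.1.1 q'.1.2 := by
    intro q q' hqq'
    have h := (hrindep.indepFun hqq').integral_mul_eq_mul_integral
      (hrmeas q.1.1 q.1.2 q.2).aestronglyMeasurable
      (hrmeas q'.1.1 q'.1.2 q'.2).aestronglyMeasurable
    rw [← hrmean q.1.1 q.1.2 q.2, ← hrmean q'.1.1 q'.1.2 q'.2]
    exact h
  -- expectations of the estimators
  have hE : ∀ i j, ∫ ω, Ehat i j ω ∂P = μ i j := by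
    intro i j
    have hw := wald1 P (s i j) (r i j) (Cb i j) (μ i j) (hsmeas i j) (hsint i j)
      (hrmeas i j) (hCbb i j) (hrmean i j) (hind1 i j)
    calc ∫ ω, Ehat i j ω ∂P
        = ∫ ω, (∫ ω', (s i j ω' : ℝ) ∂P)⁻¹ *
            (∑ k ∈ Finset.range (s i j ω), r i j k ω) ∂P :=
          integral_congr_ae (ae_of_all _ fun ω => hEhat i j ω)
      _ = (∫ ω', (s i j ω' : ℝ) ∂P)⁻¹ *
            ∫ ω, (∑ k ∈ Finset.range (s i j ω), r i j k ω) ∂P :=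
          integral_const_mul _ _
      _ = μ i j := by
          rw [hw, mul_comm (μ i j), inv_mul_cancel_left₀ (hspos i j).ne']
  have hQcI : ∀ i j j', j ≠ j' → ∫ ω, Qcross i j j' ω ∂P = μ i j * μ i j' := by
    intro i j j' hjj'
    have hw := wald2 P (s i j) (s i j') (r i j) (r i j') (Cb i j) (Cb i j')
      (μ i j * μ i j') (hCb0 i j) (hCb0 i j') (hsmeas i j) (hsmeas i j')
      (hscrossint i j j' hjj') (hrmeas i j) (hrmeas i j') (hCbb i j) (hCbb i j')
      (fun k k' => hprodmean ((i, j), k) ((i, j'), k') (by simp [Prod.ext_iff, hjj']))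
      (hind2 i j j')
    calc ∫ ω, Qcross i j j' ω ∂P
        = ∫ ω, (∫ ω', ((s i j ω' * s i j' ω' : ℕ) : ℝ) ∂P)⁻¹ *
            (∑ k ∈ Finset.range (s i j ω), ∑ k' ∈ Finset.range (s i j' ω),
              r i j k ω * r i j' k' ω) ∂P :=
          integral_congr_ae (ae_of_all _ fun ω => hQcross i j j' ω hjj')
      _ = (∫ ω', ((s i j ω' * s i j' ω' : ℕ) : ℝ) ∂P)⁻¹ *
            ∫ ω, (∑ k ∈ Finset.range (s i j ω), ∑ k' ∈ Finset.range (s i j' ω),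
              r i j k ω * r i j' k' ω) ∂P := integral_const_mul _ _
      _ = μ i j * μ i j' := by
          rw [hw, mul_comm (μ i j * μ i j'),
            inv_mul_cancel_left₀ (hscrosspos i j j' hjj').ne']
  have hQhI : ∀ i j, ∫ ω, Qhat i j ω ∂P = μ i j * μ i j := by
    intro i j
    have hw := wald3 P (s i j) (r i j) (Cb i j) (μ i j * μ i j) (hCb0 i j)
      (hsmeas i j) (hs2int i j) (hrmeas i j) (hCbb i j)
      (fun k k' hkk' => hprodmean ((i, j), k) ((i, j), k')
        (by simp [Prod.ext_iff, hkk']))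
      (hind3 i j)
    calc ∫ ω, Qhat i j ω ∂P
        = ∫ ω, (∫ ω', ((s i j ω' * (s i j ω' - 1) : ℕ) : ℝ) ∂P)⁻¹ *
            (∑ k ∈ Finset.range (s i j ω), ∑ k' ∈ (Finset.range (s i j ω)).erase k,
              r i j k ω * r i j k' ω) ∂P :=
          integral_congr_ae (ae_of_all _ fun ω => hQhat i j ω)
      _ = (∫ ω', ((s i j ω' * (s i j ω' - 1) : ℕ) : ℝ) ∂P)⁻¹ *
            ∫ ω, (∑ k ∈ Finset.range (s i j ω),
              ∑ k' ∈ (Finset.range (s i j ω)).erase k,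
                r i j k ω * r i j k' ω) ∂P := integral_const_mul _ _
      _ = μ i j * μ i j := by
          rw [hw, mul_comm (μ i j * μ i j), inv_mul_cancel_left₀ (hs2pos i j).ne']
  -- integrability of the estimators
  have hmeasSum1 : ∀ i j, Measurable fun ω => ∑ k ∈ Finset.range (s i j ω), r i j k ω := by
    intro i j
    have h : Measurable fun pq : Ω × ℕ => ∑ k ∈ Finset.range pq.2, r i j k pq.1 :=
      measurable_from_prod_countable_left fun n =>
        show Measurable fun x => ∑ k ∈ Finset.range n, r i j k x from
          Finset.measurable_sum _ (fun k _ => hrmeas i j k)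
    exact h.comp (measurable_id.prodMk (hsmeas i j))
  have hbound1 : ∀ i j ω, |∑ k ∈ Finset.range (s i j ω), r i j k ω|
      ≤ Cb i j * (s i j ω : ℝ) := by
    intro i j ω
    calc |∑ k ∈ Finset.range (s i j ω), r i j k ω|
        ≤ ∑ k ∈ Finset.range (s i j ω), |r i j k ω| :=
          Finset.abs_sum_le_sum_abs _ _
      _ ≤ ∑ _k ∈ Finset.range (s i j ω), Cb i j :=
          Finset.sum_le_sum fun k _ => hCbb i j k ω
      _ = (s i j ω : ℝ) * Cb i j := by
          rw [Finset.sum_const, Finset.card_range, nsmul_eq_mul]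
      _ = Cb i j * (s i j ω : ℝ) := mul_comm _ _
  have hintSum1 : ∀ i j, Integrable (fun ω => ∑ k ∈ Finset.range (s i j ω), r i j k ω) P :=
    fun i j => Integrable.mono' ((hsint i j).const_mul (Cb i j))
      (hmeasSum1 i j).aestronglyMeasurable
      (ae_of_all _ fun ω => by rw [Real.norm_eq_abs]; exact hbound1 i j ω)
  have hintE : ∀ i j, Integrable (Ehat i j) P := by
    intro i j
    have h : Ehat i j = fun ω => (∫ ω', (s i j ω' : ℝ) ∂P)⁻¹ *
        ∑ k ∈ Finset.range (s i j ω), r i j k ω := funext (hEhat i j)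
    rw [h]
    exact (hintSum1 i j).const_mul _
  have hintQc : ∀ i j j', j ≠ j' → Integrable (Qcross i j j') P := by
    intro i j j' hjj'
    have h : Qcross i j j' = fun ω => (∫ ω', ((s i j ω' * s i j' ω' : ℕ) : ℝ) ∂P)⁻¹ *
        ((∑ k ∈ Finset.range (s i j ω), r i j k ω) *
          (∑ k' ∈ Finset.range (s i j' ω), r i j' k' ω)) := by
      funext ω
      rw [hQcross i j j' ω hjj', Finset.sum_mul_sum]
    rw [h]
    refine Integrable.const_mul ?_ _
    refine Integrable.mono' ((hscrossint i j j' hjj').const_mul (Cb i j * Cb i j'))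
      (((hmeasSum1 i j).mul (hmeasSum1 i j')).aestronglyMeasurable)
      (ae_of_all _ fun ω => ?_)
    rw [Real.norm_eq_abs, abs_mul]
    calc |∑ k ∈ Finset.range (s i j ω), r i j k ω| *
          |∑ k' ∈ Finset.range (s i j' ω), r i j' k' ω|
        ≤ (Cb i j * (s i j ω : ℝ)) * (Cb i j' * (s i j' ω : ℝ)) :=
          mul_le_mul (hbound1 i j ω) (hbound1 i j' ω) (abs_nonneg _)
            (mul_nonneg (hCb0 i j) (Nat.cast_nonneg _))
      _ = Cb i j * Cb i j' * ((s i j ω * s i j' ω : ℕ) : ℝ) := by push_cast; ring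
  have hmeasSum3 : ∀ i j, Measurable fun ω => ∑ k ∈ Finset.range (s i j ω),
      ∑ k' ∈ (Finset.range (s i j ω)).erase k, r i j k ω * r i j k' ω := by
    intro i j
    have h : Measurable fun pq : Ω × ℕ => ∑ k ∈ Finset.range pq.2,
        ∑ k' ∈ (Finset.range pq.2).erase k, r i j k pq.1 * r i j k' pq.1 :=
      measurable_from_prod_countable_left fun n =>
        show Measurable fun x => ∑ k ∈ Finset.range n,
            ∑ k' ∈ (Finset.range n).erase k, r i j k x * r i j k' x from
          Finset.measurable_sum _ fun k _ =>
            Finset.measurable_sum _ fun k' _ => (hrmeas i j k).mul (hrmeas i j k')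
    exact h.comp (measurable_id.prodMk (hsmeas i j))
  have hbound3 : ∀ i j ω, |∑ k ∈ Finset.range (s i j ω),
        ∑ k' ∈ (Finset.range (s i j ω)).erase k, r i j k ω * r i j k' ω|
      ≤ Cb i j * Cb i j * ((s i j ω * (s i j ω - 1) : ℕ) : ℝ) := by
    intro i j ω
    calc |∑ k ∈ Finset.range (s i j ω),
          ∑ k' ∈ (Finset.range (s i j ω)).erase k, r i j k ω * r i j k' ω|
        ≤ ∑ k ∈ Finset.range (s i j ω),
            |∑ k' ∈ (Finset.range (s i j ω)).erase k, r i j k ω * r i j k' ω| :=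
          Finset.abs_sum_le_sum_abs _ _
      _ ≤ ∑ k ∈ Finset.range (s i j ω),
            ∑ k' ∈ (Finset.range (s i j ω)).erase k, |r i j k ω * r i j k' ω| :=
          Finset.sum_le_sum fun k _ => Finset.abs_sum_le_sum_abs _ _
      _ ≤ ∑ k ∈ Finset.range (s i j ω),
            ∑ _k' ∈ (Finset.range (s i j ω)).erase k, Cb i j * Cb i j :=
          Finset.sum_le_sum fun k _ => Finset.sum_le_sum fun k' _ => by
            rw [abs_mul]
            exact mul_le_mul (hCbb i j k ω) (hCbb i j k' ω) (abs_nonneg _) (hCb0 i j)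
      _ = ((s i j ω * (s i j ω - 1) : ℕ) : ℝ) * (Cb i j * Cb i j) := count_pairs _ _
      _ = Cb i j * Cb i j * ((s i j ω * (s i j ω - 1) : ℕ) : ℝ) := mul_comm _ _
  have hintQh : ∀ i j, Integrable (Qhat i j) P := by
    intro i j
    have h : Qhat i j = fun ω =>
        (∫ ω', ((s i j ω' * (s i j ω' - 1) : ℕ) : ℝ) ∂P)⁻¹ *
          ∑ k ∈ Finset.range (s i j ω), ∑ k' ∈ (Finset.range (s i j ω)).erase k,
            r i j k ω * r i j k' ω := funext (hQhat i j)
    rw [h]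
    refine Integrable.const_mul ?_ _
    exact Integrable.mono' ((hs2int i j).const_mul (Cb i j * Cb i j))
      (hmeasSum3 i j).aestronglyMeasurable
      (ae_of_all _ fun ω => by rw [Real.norm_eq_abs]; exact hbound3 i j ω)
  -- integrability of the summed pieces
  have hBint : Integrable (fun ω => ∑ i, ∑ j, p i * y i * c i j * Ehat i j ω) P :=
    integrable_finset_sum _ fun i _ => integrable_finset_sum _ fun j _ =>
      (hintE i j).const_mul _
  have hCint : Integrable (fun ω => ∑ i, ∑ j, ∑ j' ∈ Finset.univ.erase j,
      p i * c i j * c i j' * Qcross i j j' ω) P :=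
    integrable_finset_sum _ fun i _ => integrable_finset_sum _ fun j _ =>
      integrable_finset_sum _ fun j' hj' =>
        (hintQc i j j' (Ne.symm (Finset.mem_erase.mp hj').1)).const_mul _
  have hDint : Integrable (fun ω => ∑ i, ∑ j, p i * (c i j) ^ 2 * Qhat i j ω) P :=
    integrable_finset_sum _ fun i _ => integrable_finset_sum _ fun j _ =>
      (hintQh i j).const_mul _
  -- compute the integral of each piece
  have hBval : ∫ ω, (∑ i, ∑ j, p i * y i * c i j * Ehat i j ω) ∂P
      = ∑ i, ∑ j, p i * y i * c i j * μ i j := by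
    rw [integral_finset_sum _ fun i _ => integrable_finset_sum _ fun j _ =>
      (hintE i j).const_mul _]
    refine Finset.sum_congr rfl fun i _ => ?_
    rw [integral_finset_sum _ fun j _ => (hintE i j).const_mul _]
    refine Finset.sum_congr rfl fun j _ => ?_
    rw [integral_const_mul, hE i j]
  have hCval : ∫ ω, (∑ i, ∑ j, ∑ j' ∈ Finset.univ.erase j,
        p i * c i j * c i j' * Qcross i j j' ω) ∂P
      = ∑ i, ∑ j, ∑ j' ∈ Finset.univ.erase j,
          p i * c i j * c i j' * (μ i j * μ i j') := by
    rw [integral_finset_sum _ fun i _ => integrable_finset_sum _ fun j _ =>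
      integrable_finset_sum _ fun j' hj' =>
        (hintQc i j j' (Ne.symm (Finset.mem_erase.mp hj').1)).const_mul _]
    refine Finset.sum_congr rfl fun i _ => ?_
    rw [integral_finset_sum _ fun j _ => integrable_finset_sum _ fun j' hj' =>
      (hintQc i j j' (Ne.symm (Finset.mem_erase.mp hj').1)).const_mul _]
    refine Finset.sum_congr rfl fun j _ => ?_
    rw [integral_finset_sum _ fun j' hj' =>
      (hintQc i j j' (Ne.symm (Finset.mem_erase.mp hj').1)).const_mul _]
    refine Finset.sum_congr rfl fun j' hj' => ?_
    rw [integral_const_mul, hQcI i j j' (Ne.symm (Finset.mem_erase.mp hj').1)]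
  have hDval : ∫ ω, (∑ i, ∑ j, p i * (c i j) ^ 2 * Qhat i j ω) ∂P
      = ∑ i, ∑ j, p i * (c i j) ^ 2 * (μ i j * μ i j) := by
    rw [integral_finset_sum _ fun i _ => integrable_finset_sum _ fun j _ =>
      (hintQh i j).const_mul _]
    refine Finset.sum_congr rfl fun i _ => ?_
    rw [integral_finset_sum _ fun j _ => (hintQh i j).const_mul _]
    refine Finset.sum_congr rfl fun j _ => ?_
    rw [integral_const_mul, hQhI i j]
  -- put the pieces together
  have hsplit : ∫ ω, Lhat ω ∂P
      = (∑ i, p i * (y i) ^ 2) - 2 * (∑ i, ∑ j, p i * y i * c i j * μ i j) +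
        (∑ i, ∑ j, ∑ j' ∈ Finset.univ.erase j,
          p i * c i j * c i j' * (μ i j * μ i j')) +
        ∑ i, ∑ j, p i * (c i j) ^ 2 * (μ i j * μ i j) := by
    calc ∫ ω, Lhat ω ∂P
        = ∫ ω, ((∑ i, p i * (y i) ^ 2) -
            2 * (∑ i, ∑ j, p i * y i * c i j * Ehat i j ω) +
            (∑ i, ∑ j, ∑ j' ∈ Finset.univ.erase j,
              p i * c i j * c i j' * Qcross i j j' ω) +
            ∑ i, ∑ j, p i * (c i j) ^ 2 * Qhat i j ω) ∂P :=
          integral_congr_ae (ae_of_all _ hLhat)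
      _ = _ := by
          have hint12 : Integrable (fun ω => (∑ i, p i * (y i) ^ 2) -
              2 * (∑ i, ∑ j, p i * y i * c i j * Ehat i j ω)) P :=
            (integrable_const _).sub (hBint.const_mul 2)
          have hint123 : Integrable (fun ω => (∑ i, p i * (y i) ^ 2) -
              2 * (∑ i, ∑ j, p i * y i * c i j * Ehat i j ω) +
              (∑ i, ∑ j, ∑ j' ∈ Finset.univ.erase j,
                p i * c i j * c i j' * Qcross i j j' ω)) P := hint12.add hCint
          rw [integral_add hint123 hDint, integral_add hint12 hCint,
            integral_sub (integrable_const _) (hBint.const_mul 2),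
            integral_const, integral_const_mul, hBval, hCval, hDval]
          simp [measure_univ]
  rw [hsplit]
  -- final algebraic identity
  have key : ∀ i, p i * (y i - ∑ j, c i j * μ i j) ^ 2
      = p i * (y i) ^ 2 - 2 * (∑ j, p i * y i * c i j * μ i j) +
        (∑ j, ∑ j' ∈ Finset.univ.erase j, p i * c i j * c i j' * (μ i j * μ i j')) +
        ∑ j, p i * (c i j) ^ 2 * (μ i j * μ i j) := by
    intro i
    have h1 : (∑ j, p i * y i * c i j * μ i j) = p i * y i * ∑ j, c i j * μ i j := by
      rw [Finset.mul_sum]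
      exact Finset.sum_congr rfl fun j _ => by ring
    have h2 : (∑ j, ∑ j' ∈ Finset.univ.erase j,
          p i * c i j * c i j' * (μ i j * μ i j')) +
        (∑ j, p i * (c i j) ^ 2 * (μ i j * μ i j))
        = p i * (∑ j, c i j * μ i j) ^ 2 := by
      have e1 : p i * (∑ j, c i j * μ i j) ^ 2
          = ∑ j, ∑ j' : J, p i * c i j * c i j' * (μ i j * μ i j') := by
        rw [sq, Finset.sum_mul_sum, Finset.mul_sum]
        refine Finset.sum_congr rfl fun j _ => ?_
        rw [Finset.mul_sum]
        exact Finset.sum_congr rfl fun j' _ => by ring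
      rw [e1, ← Finset.sum_add_distrib]
      refine Finset.sum_congr rfl fun j _ => ?_
      rw [← Finset.add_sum_erase _
        (fun j' => p i * c i j * c i j' * (μ i j * μ i j')) (Finset.mem_univ j)]
      rw [add_comm]
      congr 1
      ring
    calc p i * (y i - ∑ j, c i j * μ i j) ^ 2
        = p i * (y i) ^ 2 - 2 * (p i * y i * ∑ j, c i j * μ i j) +
            p i * (∑ j, c i j * μ i j) ^ 2 := by ring
      _ = _ := by rw [← h1, ← h2]; ring
  rw [Finset.sum_congr rfl fun i _ => key i]
  rw [Finset.sum_add_distrib, Finset.sum_add_distrib, Finset.sum_sub_distrib,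
    ← Finset.mul_sum]
end

section
/- (Multi-group falling-factorial lemma supporting Proposition 5.) Let J ≥ 1 and for each j ∈ {1,…,J} let b_j ≥ 0 be an integer, let (r_{j,k})_{k≥1} be a sequence of i.i.d. bounded real random variables with mean μ_j, the sequences for distinct j being mutually independent, and let (s_1,…,s_J) be a vector of ℕ-valued random variables, jointly independent of all outcome sequences, with E[∏_{j=1}^{J} s_j(s_j−1)⋯(s_j−b_j+1)] finite. For each j let T_j denote the sum over all ordered b_j-tuples (k_1,…,k_{b_j}) of pairwise distinct indices in {1,…,s_j} of the product r_{j,k_1}⋯r_{j,k_{b_j}} (with T_j = 1 if b_j = 0). Then E[∏_{j=1}^{J} T_j] = E[∏_{j=1}^{J} s_j(s_j−1)⋯(s_j−b_j+1)] · ∏_{j=1}^{J} μ_j^{b_j}. -/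
open MeasureTheory ProbabilityTheory

lemma integrable_of_abs_le' {Ω : Type*} [MeasurableSpace Ω] {P : Measure Ω}
    [IsProbabilityMeasure P] {f : Ω → ℝ} (hf : Measurable f) {C : ℝ}
    (h : ∀ ω, |f ω| ≤ C) : Integrable f P :=
  ⟨hf.aestronglyMeasurable, HasFiniteIntegral.of_bounded (C := C) (ae_of_all _ h)⟩

lemma integral_finset_prod_of_iIndepFun' {ι Ω : Type*} [MeasurableSpace Ω]
    {P : Measure Ω} [IsProbabilityMeasure P] {X : ι → Ω → ℝ}
    (hindep : iIndepFun X P)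
    (hmeas : ∀ i, Measurable (X i)) (S : Finset ι) :
    ∫ ω, ∏ i ∈ S, X i ω ∂P = ∏ i ∈ S, ∫ ω, X i ω ∂P := by
  classical
  induction S using Finset.induction_on with
  | empty => simp
  | @insert i S hiS ih =>
    have hIndep : IndepFun (∏ j ∈ S, X j) (X i) P :=
      hindep.indepFun_finsetProd_of_notMem hmeas hiS
    calc ∫ ω, ∏ j ∈ insert i S, X j ω ∂P
        = ∫ ω, (∏ j ∈ S, X j) ω * X i ω ∂P := by
          refine integral_congr_ae (Filter.Eventually.of_forall fun ω => ?_)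
          simp only [Finset.prod_insert hiS, Finset.prod_apply, mul_comm]
      _ = (∫ ω, (∏ j ∈ S, X j) ω ∂P) * ∫ ω, X i ω ∂P :=
          hIndep.integral_mul_eq_mul_integral
            (by
              have : Measurable (∏ j ∈ S, X j) := by
                rw [show (∏ j ∈ S, X j) = fun ω => ∏ j ∈ S, X j ω from funext fun ω => Finset.prod_apply _ _ _]
                exact Finset.measurable_prod S fun j _ => hmeas j
              exact this.aestronglyMeasurable)
            (hmeas i).aestronglyMeasurable
      _ = ∏ j ∈ insert i S, ∫ ω, X j ω ∂P := by
          rw [Finset.prod_insert hiS, mul_comm]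
          congr 1
          · rw [← ih]
            exact integral_congr_ae (Filter.Eventually.of_forall fun ω => Finset.prod_apply _ _ _)

section Aux

variable {Ω : Type*} [MeasurableSpace Ω] {P : Measure Ω} [IsProbabilityMeasure P]
  {J : ℕ} {b : Fin J → ℕ} {μ : Fin J → ℝ} {r : Fin J → ℕ → Ω → ℝ} {C : ℝ}

/-- Pointwise bound for the multi-sum. -/
lemma mgff_bound (hC0 : 0 ≤ C) (hC : ∀ j k ω, |r j k ω| ≤ C) (x : Fin J → ℕ) (ω : Ω) :
    |∏ j, ∑ f : Fin (b j) ↪ Fin (x j), ∏ β, r j (f β : ℕ) ω| ≤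
      ((∏ j, (x j).descFactorial (b j) : ℕ) : ℝ) * C ^ (∑ j, b j) := by
  have step : ∀ j : Fin J,
      |∑ f : Fin (b j) ↪ Fin (x j), ∏ β, r j ((f β : Fin (x j)) : ℕ) ω| ≤
        ((x j).descFactorial (b j) : ℝ) * C ^ (b j) := by
    intro j
    calc |∑ f : Fin (b j) ↪ Fin (x j), ∏ β, r j ((f β : Fin (x j)) : ℕ) ω|
        ≤ ∑ f : Fin (b j) ↪ Fin (x j), |∏ β, r j ((f β : Fin (x j)) : ℕ) ω| :=
          Finset.abs_sum_le_sum_abs _ _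
      _ ≤ ∑ _f : Fin (b j) ↪ Fin (x j), C ^ (b j) := by
          refine Finset.sum_le_sum fun f _ => ?_
          calc |∏ β, r j ((f β : Fin (x j)) : ℕ) ω|
              = ∏ β, |r j ((f β : Fin (x j)) : ℕ) ω| := Finset.abs_prod _ _
            _ ≤ ∏ _β : Fin (b j), C := Finset.prod_le_prod
                (fun _ _ => abs_nonneg _) (fun β _ => hC _ _ _)
            _ = C ^ (b j) := by
                rw [Finset.prod_const, Finset.card_univ, Fintype.card_fin]
      _ = ((x j).descFactorial (b j) : ℝ) * C ^ (b j) := by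
          rw [Finset.sum_const, nsmul_eq_mul, Finset.card_univ,
            Fintype.card_embedding_eq, Fintype.card_fin, Fintype.card_fin]
  calc |∏ j, ∑ f : Fin (b j) ↪ Fin (x j), ∏ β, r j ((f β : Fin (x j)) : ℕ) ω|
      = ∏ j, |∑ f : Fin (b j) ↪ Fin (x j), ∏ β, r j ((f β : Fin (x j)) : ℕ) ω| :=
        Finset.abs_prod _ _
    _ ≤ ∏ j, ((x j).descFactorial (b j) : ℝ) * C ^ (b j) :=
        Finset.prod_le_prod (fun _ _ => abs_nonneg _) (fun j _ => step j)
    _ = ((∏ j, (x j).descFactorial (b j) : ℕ) : ℝ) * C ^ (∑ j, b j) := by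
        rw [Finset.prod_mul_distrib, ← Finset.prod_pow_eq_pow_sum]
        push_cast
        rfl

/-- Inner integral: for a fixed shot-count vector `x`, the expectation of the multi-sum
equals the falling factorial times the product of powers of the means. -/
lemma mgff_inner (hrmeas : ∀ j k, Measurable (r j k)) (hC : ∀ j k ω, |r j k ω| ≤ C)
    (hrindep : iIndepFun (fun q : Fin J × ℕ => r q.1 q.2) P)
    (hrmean : ∀ j k, ∫ ω, r j k ω ∂P = μ j) (x : Fin J → ℕ) :
    (∫ ω, ∏ j, ∑ f : Fin (b j) ↪ Fin (x j), ∏ β, r j (f β : ℕ) ω ∂P =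
      ((∏ j, (x j).descFactorial (b j) : ℕ) : ℝ) * ∏ j, μ j ^ (b j)) ∧
    Integrable (fun ω => ∏ j, ∑ f : Fin (b j) ↪ Fin (x j), ∏ β, r j (f β : ℕ) ω) P := by
  classical
  set G := Fintype.piFinset fun j => (Finset.univ : Finset (Fin (b j) ↪ Fin (x j))) with hG
  have expand : ∀ ω, (∏ j, ∑ f : Fin (b j) ↪ Fin (x j), ∏ β, r j (f β : ℕ) ω) =
      ∑ g ∈ G, ∏ j, ∏ β, r j ((g j β : Fin (x j)) : ℕ) ω := fun ω =>
    Finset.prod_univ_sum _ _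
  have hterm : ∀ g ∈ G,
      (∫ ω, ∏ j, ∏ β, r j ((g j β : Fin (x j)) : ℕ) ω ∂P = ∏ j, μ j ^ (b j)) ∧
        Integrable (fun ω => ∏ j, ∏ β, r j ((g j β : Fin (x j)) : ℕ) ω) P := by
    intro g _
    set e : (Σ j : Fin J, Fin (b j)) → Fin J × ℕ :=
      fun p => (p.1, ((g p.1 p.2 : Fin (x p.1)) : ℕ)) with he
    have einj : Function.Injective e := by
      rintro ⟨j, β⟩ ⟨j', β'⟩ h
      obtain rfl : j = j' := congrArg Prod.fst h
      have h2 : ((g j β : Fin (x j)) : ℕ) = ((g j β' : Fin (x j)) : ℕ) := congrArg Prod.snd h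
      have h3 : (g j β : Fin (x j)) = g j β' := Fin.val_injective h2
      exact congrArg _ ((g j).injective h3)
    set T : Finset (Fin J × ℕ) := Finset.univ.image e with hT
    have hre : ∀ ω, ∏ j, ∏ β, r j ((g j β : Fin (x j)) : ℕ) ω =
        ∏ q ∈ T, r q.1 q.2 ω := by
      intro ω
      rw [hT, Finset.prod_image (fun a _ b _ h => einj h)]
      rw [← Finset.univ_sigma_univ, Finset.prod_sigma]
    obtain ⟨C0, hC0⟩ : ∃ C0, ∀ q : Fin J × ℕ, ∀ ω, |r q.1 q.2 ω| ≤ C0 :=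
      ⟨C, fun q ω => hC q.1 q.2 ω⟩
    have hbd : ∀ ω, |∏ q ∈ T, r q.1 q.2 ω| ≤ C0 ^ T.card := fun ω =>
      calc |∏ q ∈ T, r q.1 q.2 ω| = ∏ q ∈ T, |r q.1 q.2 ω| := Finset.abs_prod _ _
        _ ≤ ∏ q ∈ T, C0 := Finset.prod_le_prod (fun _ _ => abs_nonneg _)
            (fun q _ => hC0 q ω)
        _ = C0 ^ T.card := Finset.prod_const C0
    have hint : Integrable (fun ω => ∏ q ∈ T, r q.1 q.2 ω) P :=
      integrable_of_abs_le' (Finset.measurable_prod _ fun q _ => hrmeas q.1 q.2) hbd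
    have hval : ∫ ω, ∏ q ∈ T, r q.1 q.2 ω ∂P = ∏ j, μ j ^ (b j) := by
      rw [integral_finset_prod_of_iIndepFun' hrindep (fun q => hrmeas q.1 q.2)]
      calc ∏ q ∈ T, ∫ ω, r q.1 q.2 ω ∂P = ∏ q ∈ T, μ q.1 :=
            Finset.prod_congr rfl fun q _ => hrmean q.1 q.2
        _ = ∏ p : (Σ j : Fin J, Fin (b j)), μ (e p).1 := by
            rw [hT, Finset.prod_image (fun a _ b _ h => einj h)]
        _ = ∏ j, ∏ _β : Fin (b j), μ j := by
            rw [← Finset.univ_sigma_univ, Finset.prod_sigma]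
        _ = ∏ j, μ j ^ (b j) := Finset.prod_congr rfl fun j _ => by
            rw [Finset.prod_const, Finset.card_univ, Fintype.card_fin]
    constructor
    · rw [integral_congr_ae (Filter.Eventually.of_forall hre), hval]
    · exact hint.congr (Filter.Eventually.of_forall fun ω => (hre ω).symm)
  constructor
  · calc ∫ ω, ∏ j, ∑ f : Fin (b j) ↪ Fin (x j), ∏ β, r j (f β : ℕ) ω ∂P
        = ∫ ω, ∑ g ∈ G, ∏ j, ∏ β, r j ((g j β : Fin (x j)) : ℕ) ω ∂P :=
          integral_congr_ae (Filter.Eventually.of_forall expand)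
      _ = ∑ g ∈ G, ∫ ω, ∏ j, ∏ β, r j ((g j β : Fin (x j)) : ℕ) ω ∂P :=
          integral_finset_sum _ fun g hg => (hterm g hg).2
      _ = ∑ _g ∈ G, ∏ j, μ j ^ (b j) := Finset.sum_congr rfl fun g hg => (hterm g hg).1
      _ = (G.card : ℝ) * ∏ j, μ j ^ (b j) := by rw [Finset.sum_const, nsmul_eq_mul]
      _ = ((∏ j, (x j).descFactorial (b j) : ℕ) : ℝ) * ∏ j, μ j ^ (b j) := by
          have hcard : G.card = ∏ j, (x j).descFactorial (b j) := by
            rw [hG, Fintype.card_piFinset]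
            refine Finset.prod_congr rfl fun j _ => ?_
            rw [Finset.card_univ, Fintype.card_embedding_eq, Fintype.card_fin,
              Fintype.card_fin]
          rw [hcard]
  · refine (integrable_finset_sum G fun g hg => (hterm g hg).2).congr
      (Filter.Eventually.of_forall fun ω => (expand ω).symm)

end Aux


set_option maxHeartbeats 1000000 in
/-- **Multi-group falling-factorial lemma.** For each `j : Fin J` let `(r j k)` be an i.i.d.
sequence of bounded real random variables with mean `μ j`, the sequences for distinct `j`
being mutually independent, and let `(s j)` be `ℕ`-valued shot counts jointly independent of
all outcome sequences with `E[∏ j, (s j)⁻(b j)] < ∞` (falling factorial).  Writing `T j` for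
the sum over all ordered `b j`-tuples of pairwise distinct indices in `{1,…,s j}` (realized
as a sum over injections `Fin (b j) ↪ Fin (s j)`) of the product of the corresponding
outcomes, one has `E[∏ j, T j] = E[∏ j, (s j)⁻(b j)] * ∏ j, (μ j) ^ (b j)`. -/
theorem multigroup_falling_factorial
    {Ω : Type*} [MeasurableSpace Ω] (P : Measure Ω) [IsProbabilityMeasure P]
    (J : ℕ) (hJ : 1 ≤ J) (b : Fin J → ℕ) (μ : Fin J → ℝ)
    (r : Fin J → ℕ → Ω → ℝ) (s : Fin J → Ω → ℕ)
    (hrmeas : ∀ j k, Measurable (r j k))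
    (hrbdd : ∀ j, ∃ C, ∀ k ω, |r j k ω| ≤ C)
    (hrindep : iIndepFun
      (fun q : Fin J × ℕ => r q.1 q.2) P)
    (hrident : ∀ j k, IdentDistrib (r j k) (r j 0) P P)
    (hrmean : ∀ j k, ∫ ω, r j k ω ∂P = μ j)
    (hsmeas : ∀ j, Measurable (s j))
    (hsindep : IndepFun (fun ω => fun j => s j ω)
      (fun ω => fun q : Fin J × ℕ => r q.1 q.2 ω) P)
    (hdescint : Integrable
      (fun ω => ((∏ j, (s j ω).descFactorial (b j) : ℕ) : ℝ)) P) :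
    ∫ ω, ∏ j, (∑ f : Fin (b j) ↪ Fin (s j ω), ∏ β, r j (f β : ℕ) ω) ∂P =
      (∫ ω, ((∏ j, (s j ω).descFactorial (b j) : ℕ) : ℝ) ∂P) *
        ∏ j, (μ j) ^ (b j) := by
  classical
  obtain ⟨C, hC0, hC⟩ : ∃ C, 0 ≤ C ∧ ∀ j k ω, |r j k ω| ≤ C := by
    choose C hC using hrbdd
    refine ⟨∑ j, |C j|, Finset.sum_nonneg fun _ _ => abs_nonneg _, fun j k ω => (hC j k ω).trans ?_⟩
    calc C j ≤ |C j| := le_abs_self _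
      _ ≤ ∑ j, |C j| := Finset.single_le_sum (f := fun j => |C j|)
            (fun _ _ => abs_nonneg _) (Finset.mem_univ j)
  have hRmeas : Measurable (fun ω (q : Fin J × ℕ) => r q.1 q.2 ω) :=
    measurable_pi_lambda _ fun q => hrmeas q.1 q.2
  have hSmeas : Measurable (fun ω (j : Fin J) => s j ω) :=
    measurable_pi_lambda _ fun j => hsmeas j
  have hFmeas : Measurable (fun p : (Fin J → ℕ) × (Fin J × ℕ → ℝ) =>
      ∏ j, ∑ f : Fin (b j) ↪ Fin (p.1 j), ∏ β, p.2 (j, (f β : ℕ))) := by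
    have h1 : Measurable (fun p : (Fin J × ℕ → ℝ) × (Fin J → ℕ) =>
        ∏ j, ∑ f : Fin (b j) ↪ Fin (p.2 j), ∏ β, p.1 (j, (f β : ℕ))) := by
      apply measurable_from_prod_countable_left
      intro x
      show Measurable fun y : Fin J × ℕ → ℝ =>
        ∏ j, ∑ f : Fin (b j) ↪ Fin (x j), ∏ β, y (j, (f β : ℕ))
      refine Finset.measurable_prod Finset.univ fun j _ => ?_
      refine Finset.measurable_sum Finset.univ fun f _ => ?_
      exact Finset.measurable_prod _ fun β _ => measurable_pi_apply _
    have heq : (fun p : (Fin J → ℕ) × (Fin J × ℕ → ℝ) =>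
        ∏ j, ∑ f : Fin (b j) ↪ Fin (p.1 j), ∏ β, p.2 (j, (f β : ℕ))) =
        (fun p : (Fin J × ℕ → ℝ) × (Fin J → ℕ) =>
        ∏ j, ∑ f : Fin (b j) ↪ Fin (p.2 j), ∏ β, p.1 (j, (f β : ℕ))) ∘ Prod.swap := by
      funext p
      rfl
    rw [heq]
    exact h1.comp measurable_swap
  haveI : IsProbabilityMeasure (P.map (fun ω (q : Fin J × ℕ) => r q.1 q.2 ω)) :=
    Measure.isProbabilityMeasure_map hRmeas.aemeasurable
  haveI : IsProbabilityMeasure (P.map (fun ω (j : Fin J) => s j ω)) :=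
    Measure.isProbabilityMeasure_map hSmeas.aemeasurable
  have hpair : Measurable (fun ω =>
      ((fun j => s j ω), (fun q : Fin J × ℕ => r q.1 q.2 ω))) := hSmeas.prodMk hRmeas
  have hmap : P.map (fun ω => ((fun j => s j ω), (fun q : Fin J × ℕ => r q.1 q.2 ω))) =
      (P.map (fun ω (j : Fin J) => s j ω)).prod (P.map (fun ω (q : Fin J × ℕ) => r q.1 q.2 ω)) :=
    (indepFun_iff_map_prod_eq_prod_map_map hSmeas.aemeasurable hRmeas.aemeasurable).1 hsindep
  have hint_orig : Integrable (fun ω =>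
      ∏ j, ∑ f : Fin (b j) ↪ Fin (s j ω), ∏ β, r j (f β : ℕ) ω) P := by
    refine Integrable.mono' (hdescint.mul_const (C ^ (∑ j, b j)))
      (hFmeas.comp hpair).aestronglyMeasurable
      (Filter.Eventually.of_forall fun ω => ?_)
    rw [Real.norm_eq_abs]
    exact mgff_bound hC0 hC (fun j => s j ω) ω
  have hFint : Integrable (fun p : (Fin J → ℕ) × (Fin J × ℕ → ℝ) =>
      ∏ j, ∑ f : Fin (b j) ↪ Fin (p.1 j), ∏ β, p.2 (j, (f β : ℕ)))
      ((P.map (fun ω (j : Fin J) => s j ω)).prod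
        (P.map (fun ω (q : Fin J × ℕ) => r q.1 q.2 ω))) := by
    rw [← hmap]
    exact (integrable_map_measure hFmeas.aestronglyMeasurable hpair.aemeasurable).2 hint_orig
  have hDmeas : Measurable (fun x : Fin J → ℕ =>
      ((∏ j, (x j).descFactorial (b j) : ℕ) : ℝ)) := measurable_of_countable _
  calc ∫ ω, ∏ j, (∑ f : Fin (b j) ↪ Fin (s j ω), ∏ β, r j (f β : ℕ) ω) ∂P
      = ∫ p : (Fin J → ℕ) × (Fin J × ℕ → ℝ),
          (∏ j, ∑ f : Fin (b j) ↪ Fin (p.1 j), ∏ β, p.2 (j, (f β : ℕ)))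
          ∂(P.map (fun ω => ((fun j => s j ω), (fun q : Fin J × ℕ => r q.1 q.2 ω)))) :=
        (integral_map hpair.aemeasurable hFmeas.aestronglyMeasurable).symm
    _ = ∫ p : (Fin J → ℕ) × (Fin J × ℕ → ℝ),
          (∏ j, ∑ f : Fin (b j) ↪ Fin (p.1 j), ∏ β, p.2 (j, (f β : ℕ)))
          ∂((P.map (fun ω (j : Fin J) => s j ω)).prod
            (P.map (fun ω (q : Fin J × ℕ) => r q.1 q.2 ω))) := by rw [hmap]
    _ = ∫ x, ∫ y, (∏ j, ∑ f : Fin (b j) ↪ Fin (x j), ∏ β, y (j, (f β : ℕ)))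
          ∂(P.map (fun ω (q : Fin J × ℕ) => r q.1 q.2 ω))
          ∂(P.map (fun ω (j : Fin J) => s j ω)) := integral_prod _ hFint
    _ = ∫ x, ((∏ j, (x j).descFactorial (b j) : ℕ) : ℝ) * ∏ j, (μ j) ^ (b j)
          ∂(P.map (fun ω (j : Fin J) => s j ω)) := by
        refine integral_congr_ae (Filter.Eventually.of_forall fun x => ?_)
        beta_reduce
        have hslice : Measurable fun y : Fin J × ℕ → ℝ =>
            ∏ j, ∑ f : Fin (b j) ↪ Fin (x j), ∏ β, y (j, (f β : ℕ)) := by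
          refine Finset.measurable_prod Finset.univ fun j _ => ?_
          refine Finset.measurable_sum Finset.univ fun f _ => ?_
          exact Finset.measurable_prod _ fun β _ => measurable_pi_apply _
        rw [integral_map hRmeas.aemeasurable hslice.aestronglyMeasurable]
        exact (mgff_inner hrmeas hC hrindep hrmean x).1
    _ = (∫ x, ((∏ j, (x j).descFactorial (b j) : ℕ) : ℝ)
          ∂(P.map (fun ω (j : Fin J) => s j ω))) * ∏ j, (μ j) ^ (b j) :=
        integral_mul_const _ _
    _ = (∫ ω, ((∏ j, (s j ω).descFactorial (b j) : ℕ) : ℝ) ∂P) * ∏ j, (μ j) ^ (b j) := by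
        rw [integral_map hSmeas.aemeasurable hDmeas.aestronglyMeasurable]
end

section
/- (Proposition 5, Appendix D: unbiased estimator for loss functions with polynomial dependence on the observables.) Let I be a finite index set, D ≥ 0 and J ≥ 1 integers, and for each i ∈ I, z ∈ {0,…,D}, j ∈ {1,…,J} let p_{i,z} ∈ ℝ and c_{i,j} ∈ ℝ be coefficients and μ_{i,j} ∈ ℝ target expectation values. For each (i,j) let (r_{i,j,k})_{k≥1} be a sequence of i.i.d. bounded real random variables with mean μ_{i,j}, mutually independent across distinct (i,j). Let (s_{i,j}) be a family of ℕ-valued random variables, jointly independent of all outcome sequences, such that for every i, z and every tuple of nonnegative integers (b_1,…,b_J) with b_1+⋯+b_J = z, the expectation N_{i,b} := E[∏_{j=1}^{J} s_{i,j}(s_{i,j}−1)⋯(s_{i,j}−b_j+1)] is finite and strictly positive. For each such (i, z, b) let R̂_{i,b} = (1/N_{i,b}) · ∏_{j=1}^{J} (sum over ordered b_j-tuples of pairwise distinct indices in {1,…,s_{i,j}} of the product of the corresponding r_{i,j,·}). Define L̂ = Σ_{i,z} p_{i,z} Σ_{b_1+⋯+b_J = z} (z! / (b_1!⋯b_J!))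 · (∏_{j=1}^{J} c_{i,j}^{b_j}) · R̂_{i,b}. Then E[L̂] = Σ_{i∈I} Σ_{z=0}^{D} p_{i,z} · (Σ_{j=1}^{J} c_{i,j} μ_{i,j})^{z}. -/
open MeasureTheory ProbabilityTheory

section Aux
variable {Ω : Type*} [MeasurableSpace Ω] {P : Measure Ω} [IsProbabilityMeasure P]

lemma aux_integrable_bdd {f : Ω → ℝ} (hf : Measurable f) {C : ℝ} (h : ∀ ω, |f ω| ≤ C) :
    Integrable f P :=
  (integrable_const C).mono' hf.aestronglyMeasurable
    (Filter.Eventually.of_forall fun ω => by simpa [Real.norm_eq_abs] using h ω)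

lemma aux_indep_prod {ι : Type*} {X : ι → Ω → ℝ}
    (hX : iIndepFun X P) (hm : ∀ q, Measurable (X q))
    (hb : ∀ q, ∃ C, ∀ ω, |X q ω| ≤ C) (t : Finset ι) :
    ∫ ω, ∏ q ∈ t, X q ω ∂P = ∏ q ∈ t, ∫ ω, X q ω ∂P := by
  classical
  choose C hC using hb
  have hB : ∀ q ω, |X q ω| ≤ max (C q) 0 := fun q ω => (hC q ω).trans (le_max_left _ _)
  have hprodbdd : ∀ (u : Finset ι) ω, |∏ q ∈ u, X q ω| ≤ ∏ q ∈ u, max (C q) 0 := by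
    intro u ω
    rw [Finset.abs_prod]
    exact Finset.prod_le_prod (fun q _ => abs_nonneg _) (fun q _ => hB q ω)
  have hint : ∀ u : Finset ι, Integrable (fun ω => ∏ q ∈ u, X q ω) P := fun u =>
    aux_integrable_bdd (Finset.measurable_prod _ fun q _ => hm q) (hprodbdd u)
  induction t using Finset.cons_induction with
  | empty => simp
  | cons a t ha ih =>
    have hIndep : IndepFun (X a) (fun ω => ∏ q ∈ t, X q ω) P := by
      have h1 := (hX.indepFun_finsetProd_of_notMem hm ha).symm
      have h2 : (∏ j ∈ t, X j) = fun ω => ∏ q ∈ t, X q ω := by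
        funext ω; simp [Finset.prod_apply]
      rwa [h2] at h1
    have hmul := hIndep.integral_mul_eq_mul_integral
      (aux_integrable_bdd (hm a) (hB a)).aestronglyMeasurable (hint t).aestronglyMeasurable
    have h3 : (X a * fun ω => ∏ q ∈ t, X q ω) = fun ω => ∏ q ∈ Finset.cons a t ha, X q ω := by
      funext ω; rw [Pi.mul_apply, Finset.prod_cons]
    rw [h3] at hmul
    rw [Finset.prod_cons, ← ih]
    exact hmul

lemma aux_indep_prod_comp {ι κ : Type*} [Fintype κ] {X : ι → Ω → ℝ}
    (hX : iIndepFun X P) (hm : ∀ q, Measurable (X q))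
    (hb : ∀ q, ∃ C, ∀ ω, |X q ω| ≤ C) {e : κ → ι} (he : Function.Injective e) :
    ∫ ω, ∏ k, X (e k) ω ∂P = ∏ k, ∫ ω, X (e k) ω ∂P := by
  classical
  have h1 : ∀ ω, ∏ k, X (e k) ω = ∏ q ∈ Finset.univ.image e, X q ω := fun ω => by
    rw [Finset.prod_image (fun x _ y _ h => he h)]
  have h2 : ∏ k, ∫ ω, X (e k) ω ∂P = ∏ q ∈ Finset.univ.image e, ∫ ω, X q ω ∂P := by
    rw [Finset.prod_image (fun x _ y _ h => he h)]
  simp only [h1, h2]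
  exact aux_indep_prod hX hm hb _

lemma aux_measurable_nat {F : ℕ → Ω → ℝ} (hF : ∀ n, Measurable (F n)) {s : Ω → ℕ}
    (hs : Measurable s) : Measurable fun ω => F (s ω) ω := by
  have h : (fun ω => F (s ω) ω) = (fun p : Ω × ℕ => F p.2 p.1) ∘ (fun ω => (ω, s ω)) := rfl
  rw [h]
  exact (measurable_from_prod_countable_left fun n => hF n).comp (measurable_id.prodMk hs)

omit [IsProbabilityMeasure P] in
lemma aux_fiber {ν : Type*} [Countable ν] [MeasurableSpace ν] [IsFiniteMeasure P] {S : Ω → ν}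
    (hA : ∀ n : ν, MeasurableSet (S ⁻¹' {n})) {g : Ω → ℝ} (hg : Integrable g P) :
    ∫ ω, g ω ∂P = ∑' n : ν, ∫ ω in S ⁻¹' {n}, g ω ∂P := by
  have hU : (⋃ n : ν, S ⁻¹' {n}) = Set.univ := by ext ω; simp
  have hd : Pairwise (Function.onFun Disjoint fun n : ν => S ⁻¹' {n}) := by
    intro n m hnm
    refine Set.disjoint_left.2 fun ω h1 h2 => hnm ?_
    simp only [Set.mem_preimage, Set.mem_singleton_iff] at h1 h2
    rw [← h1, ← h2]
  rw [← setIntegral_univ, ← hU, integral_iUnion hA hd (hU ▸ hg.integrableOn)]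

end Aux

section Key

variable {Ω : Type*} [MeasurableSpace Ω] (P : Measure Ω) [IsProbabilityMeasure P]
  {I : Type*} [Fintype I] {J : ℕ}

/-- Bound on the sum over embeddings. -/
lemma aux_emb_bound {b m : ℕ} {x : ℕ → ℝ} {C : ℝ} (hx : ∀ k, |x k| ≤ C) :
    |∑ f : Fin b ↪ Fin m, ∏ β, x (f β : ℕ)| ≤ (m.descFactorial b : ℝ) * C ^ b := by
  have hC : 0 ≤ C := le_trans (abs_nonneg _) (hx 0)
  calc |∑ f : Fin b ↪ Fin m, ∏ β, x (f β : ℕ)|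
      ≤ ∑ f : Fin b ↪ Fin m, |∏ β, x (f β : ℕ)| := Finset.abs_sum_le_sum_abs _ _
    _ ≤ ∑ _f : Fin b ↪ Fin m, C ^ b := by
        refine Finset.sum_le_sum fun f _ => ?_
        rw [Finset.abs_prod]
        calc ∏ β, |x (f β : ℕ)| ≤ ∏ _β : Fin b, C :=
              Finset.prod_le_prod (fun _ _ => abs_nonneg _) (fun β _ => hx _)
          _ = C ^ b := by simp
    _ = (m.descFactorial b : ℝ) * C ^ b := by
        rw [Finset.sum_const, Finset.card_univ, Fintype.card_embedding_eq]
        simp [nsmul_eq_mul]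

lemma key_integral
    (μ : I → Fin J → ℝ) (r : I → Fin J → ℕ → Ω → ℝ) (s : I → Fin J → Ω → ℕ)
    (hrmeas : ∀ i j k, Measurable (r i j k))
    (C : I → Fin J → ℝ) (hC : ∀ i j k ω, |r i j k ω| ≤ C i j)
    (hrindep : iIndepFun
      (fun q : (I × Fin J) × ℕ => r q.1.1 q.1.2 q.2) P)
    (hrmean : ∀ i j k, ∫ ω, r i j k ω ∂P = μ i j)
    (hsmeas : ∀ i j, Measurable (s i j))
    (hsindep : IndepFun (fun ω => fun q : I × Fin J => s q.1 q.2 ω)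
      (fun ω => fun q : (I × Fin J) × ℕ => r q.1.1 q.1.2 q.2 ω) P)
    (i : I) (b : Fin J → ℕ)
    (hint : Integrable (fun ω => ((∏ j, (s i j ω).descFactorial (b j) : ℕ) : ℝ)) P) :
    ∫ ω, (∏ j, ∑ f : Fin (b j) ↪ Fin (s i j ω), ∏ β, r i j (f β : ℕ) ω) ∂P
      = (∫ ω, ((∏ j, (s i j ω).descFactorial (b j) : ℕ) : ℝ) ∂P) * ∏ j, μ i j ^ (b j) := by
  classical
  set M : ℝ := ∏ j, μ i j ^ (b j) with hM
  set K : ℝ := ∏ j, C i j ^ (b j) with hK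
  set S : Ω → (I × Fin J → ℕ) := fun ω q => s q.1 q.2 ω with hS
  have hSmeas : Measurable S := measurable_pi_lambda _ fun q => hsmeas q.1 q.2
  have hA : ∀ n : I × Fin J → ℕ, MeasurableSet (S ⁻¹' {n}) := fun n =>
    hSmeas (measurableSet_singleton n)
  -- the function with frozen shot counts
  set G : (I × Fin J → ℕ) → Ω → ℝ := fun n ω =>
    ∏ j, ∑ f : Fin (b j) ↪ Fin (n (i, j)), ∏ β, r i j (f β : ℕ) ω with hG
  have hGmeas : ∀ n, Measurable (G n) := fun n =>
    Finset.measurable_prod _ fun j _ => Finset.measurable_sum _ fun f _ =>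
      Finset.measurable_prod _ fun β _ => hrmeas i j _
  have hGbdd : ∀ n ω, |G n ω| ≤ (∏ j, ((n (i, j)).descFactorial (b j) : ℝ)) * K := by
    intro n ω
    rw [hG]
    calc |∏ j, ∑ f : Fin (b j) ↪ Fin (n (i, j)), ∏ β, r i j (f β : ℕ) ω|
        = ∏ j, |∑ f : Fin (b j) ↪ Fin (n (i, j)), ∏ β, r i j (f β : ℕ) ω| :=
          Finset.abs_prod _ _
      _ ≤ ∏ j, ((n (i, j)).descFactorial (b j) : ℝ) * C i j ^ (b j) :=
          Finset.prod_le_prod (fun _ _ => abs_nonneg _)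
            (fun j _ => aux_emb_bound (fun k => hC i j k ω))
      _ = (∏ j, ((n (i, j)).descFactorial (b j) : ℝ)) * K := Finset.prod_mul_distrib
  have hGint : ∀ n, Integrable (G n) P := fun n => aux_integrable_bdd (hGmeas n) (hGbdd n)
  -- expectation with frozen shot counts
  have hGint_eq : ∀ n, ∫ ω, G n ω ∂P = (∏ j, ((n (i, j)).descFactorial (b j) : ℝ)) * M := by
    intro n
    have hexp : ∀ ω, G n ω = ∑ F ∈ Fintype.piFinset
        (fun j => (Finset.univ : Finset (Fin (b j) ↪ Fin (n (i, j))))),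
        ∏ j, ∏ β, r i j ((F j) β : ℕ) ω := fun ω => Finset.prod_univ_sum _ _
    have hsummeas : ∀ F : (j : Fin J) → (Fin (b j) ↪ Fin (n (i, j))),
        Measurable fun ω => ∏ j, ∏ β, r i j ((F j) β : ℕ) ω := fun F =>
      Finset.measurable_prod _ fun j _ => Finset.measurable_prod _ fun β _ => hrmeas i j _
    have hsumbdd : ∀ (F : (j : Fin J) → (Fin (b j) ↪ Fin (n (i, j)))) ω,
        |∏ j, ∏ β, r i j ((F j) β : ℕ) ω| ≤ K := by
      intro F ω
      rw [Finset.abs_prod, hK]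
      refine Finset.prod_le_prod (fun _ _ => abs_nonneg _) (fun j _ => ?_)
      rw [Finset.abs_prod]
      calc ∏ β, |r i j ((F j) β : ℕ) ω| ≤ ∏ _β : Fin (b j), C i j :=
            Finset.prod_le_prod (fun _ _ => abs_nonneg _) (fun β _ => hC i j _ ω)
        _ = C i j ^ (b j) := by simp
    calc ∫ ω, G n ω ∂P
        = ∫ ω, ∑ F ∈ Fintype.piFinset
            (fun j => (Finset.univ : Finset (Fin (b j) ↪ Fin (n (i, j))))),
            ∏ j, ∏ β, r i j ((F j) β : ℕ) ω ∂P := by simp only [hexp]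
      _ = ∑ F ∈ Fintype.piFinset
            (fun j => (Finset.univ : Finset (Fin (b j) ↪ Fin (n (i, j))))),
            ∫ ω, ∏ j, ∏ β, r i j ((F j) β : ℕ) ω ∂P :=
          integral_finset_sum _ (fun F _ => aux_integrable_bdd (hsummeas F) (hsumbdd F))
      _ = ∑ _F ∈ Fintype.piFinset
            (fun j => (Finset.univ : Finset (Fin (b j) ↪ Fin (n (i, j))))), M := by
          refine Finset.sum_congr rfl fun F _ => ?_
          -- reindex along a sigma type
          have hsig : ∀ ω, ∏ j, ∏ β, r i j ((F j) β : ℕ) ω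
              = ∏ x : Σ j : Fin J, Fin (b j), r i x.1 ((F x.1) x.2 : ℕ) ω := by
            intro ω
            rw [← Finset.univ_sigma_univ, Finset.prod_sigma]
          simp only [hsig]
          have hinj : Function.Injective
              (fun x : Σ j : Fin J, Fin (b j) => ((i, x.1), ((F x.1) x.2 : ℕ))) := by
            rintro ⟨j1, β1⟩ ⟨j2, β2⟩ hxy
            simp only [Prod.mk.injEq] at hxy
            obtain ⟨⟨-, hj⟩, hk⟩ := hxy
            subst hj
            have : β1 = β2 := (F j1).injective (Fin.val_injective hk)
            subst this
            rfl
          have := aux_indep_prod_comp (P := P)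
            (X := fun q : (I × Fin J) × ℕ => r q.1.1 q.1.2 q.2) hrindep
            (fun q => hrmeas q.1.1 q.1.2 q.2)
            (fun q => ⟨C q.1.1 q.1.2, fun ω => hC q.1.1 q.1.2 q.2 ω⟩) hinj
          rw [this]
          have : ∀ x : Σ j : Fin J, Fin (b j),
              ∫ ω, r i x.1 ((F x.1) x.2 : ℕ) ω ∂P = μ i x.1 := fun x => hrmean i x.1 _
          rw [Finset.prod_congr rfl (fun x _ => this x)]
          rw [← Finset.univ_sigma_univ, Finset.prod_sigma]
          simp [hM]
      _ = (∏ j, ((n (i, j)).descFactorial (b j) : ℝ)) * M := by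
          rw [Finset.sum_const, Fintype.card_piFinset]
          simp [nsmul_eq_mul, Fintype.card_embedding_eq]
  -- the actual estimator core and its properties
  set g : Ω → ℝ := fun ω => ∏ j, ∑ f : Fin (b j) ↪ Fin (s i j ω), ∏ β, r i j (f β : ℕ) ω with hg
  have hgmeas : Measurable g := by
    refine Finset.measurable_prod _ fun j _ => ?_
    exact aux_measurable_nat
      (F := fun m ω => ∑ f : Fin (b j) ↪ Fin m, ∏ β, r i j (f β : ℕ) ω)
      (fun m => Finset.measurable_sum _ fun f _ =>
        Finset.measurable_prod _ fun β _ => hrmeas i j _)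
      (hsmeas i j)
  have hgSG : ∀ ω, g ω = G (S ω) ω := fun ω => rfl
  have hgbdd : ∀ ω, |g ω| ≤ ((∏ j, (s i j ω).descFactorial (b j) : ℕ) : ℝ) * K := by
    intro ω
    rw [hgSG ω]
    refine (hGbdd (S ω) ω).trans_eq ?_
    push_cast
    rfl
  have hgint : Integrable g P :=
    (hint.mul_const K).mono' hgmeas.aestronglyMeasurable
      (Filter.Eventually.of_forall fun ω => by simpa [Real.norm_eq_abs] using hgbdd ω)
  -- per-fiber value of the estimator core
  have hfib : ∀ n, ∫ ω in S ⁻¹' {n}, g ω ∂P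
      = (P (S ⁻¹' {n})).toReal * ((∏ j, ((n (i, j)).descFactorial (b j) : ℝ)) * M) := by
    intro n
    have e1 : ∫ ω in S ⁻¹' {n}, g ω ∂P = ∫ ω in S ⁻¹' {n}, G n ω ∂P := by
      refine setIntegral_congr_fun (hA n) fun ω hω => ?_
      have hω' : S ω = n := hω
      rw [hgSG ω, hω']
    set φ : (I × Fin J → ℕ) → ℝ := ({n} : Set (I × Fin J → ℕ)).indicator (fun _ => 1) with hφ
    set ψ : ((I × Fin J) × ℕ → ℝ) → ℝ := fun x =>
      ∏ j, ∑ f : Fin (b j) ↪ Fin (n (i, j)), ∏ β, x ((i, j), (f β : ℕ)) with hψ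
    have hφm : Measurable φ := measurable_const.indicator (measurableSet_singleton n)
    have hψm : Measurable ψ :=
      Finset.measurable_prod _ fun j _ => Finset.measurable_sum _ fun f _ =>
        Finset.measurable_prod _ fun β _ => measurable_pi_apply _
    have hindep2 : IndepFun (φ ∘ S)
        (ψ ∘ (fun ω => fun q : (I × Fin J) × ℕ => r q.1.1 q.1.2 q.2 ω)) P :=
      hsindep.comp hφm hψm
    have hcomp : (ψ ∘ (fun ω => fun q : (I × Fin J) × ℕ => r q.1.1 q.1.2 q.2 ω)) = G n := rfl
    rw [hcomp] at hindep2
    have hφSbd : ∀ ω, |(φ ∘ S) ω| ≤ (1 : ℝ) := by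
      intro ω
      by_cases hω : S ω = n <;> simp [hφ, Function.comp, Set.indicator_apply, hω]
    have hφSint : Integrable (φ ∘ S) P :=
      aux_integrable_bdd (hφm.comp hSmeas) hφSbd
    have hmul := hindep2.integral_mul_eq_mul_integral hφSint.aestronglyMeasurable (hGint n).aestronglyMeasurable
    have hiS : (φ ∘ S) = (S ⁻¹' {n}).indicator (fun _ => (1 : ℝ)) := by
      funext ω
      by_cases hω : S ω = n <;>
        simp [hφ, Function.comp, Set.indicator_apply, hω, Set.mem_preimage]
    have e2 : (S ⁻¹' {n}).indicator (G n) = (φ ∘ S) * (G n) := by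
      funext ω
      by_cases hω : S ω = n <;>
        simp [hφ, Function.comp, Set.indicator_apply, hω, Set.mem_preimage]
    calc ∫ ω in S ⁻¹' {n}, g ω ∂P = ∫ ω in S ⁻¹' {n}, G n ω ∂P := e1
      _ = ∫ ω, (S ⁻¹' {n}).indicator (G n) ω ∂P := (integral_indicator (hA n)).symm
      _ = ∫ ω, ((φ ∘ S) * (G n)) ω ∂P := by rw [e2]
      _ = (∫ ω, (φ ∘ S) ω ∂P) * ∫ ω, G n ω ∂P := hmul
      _ = (P (S ⁻¹' {n})).toReal * ((∏ j, ((n (i, j)).descFactorial (b j) : ℝ)) * M) := by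
          rw [hiS, hGint_eq n, integral_indicator_const (1 : ℝ) (hA n), smul_eq_mul, mul_one, measureReal_def]
  -- per-fiber value of the descFactorial product
  have hfibh : ∀ n, ∫ ω in S ⁻¹' {n}, ((∏ j, (s i j ω).descFactorial (b j) : ℕ) : ℝ) ∂P
      = (P (S ⁻¹' {n})).toReal * (∏ j, ((n (i, j)).descFactorial (b j) : ℝ)) := by
    intro n
    have e1 : ∫ ω in S ⁻¹' {n}, ((∏ j, (s i j ω).descFactorial (b j) : ℕ) : ℝ) ∂P
        = ∫ _ω in S ⁻¹' {n}, (∏ j, ((n (i, j)).descFactorial (b j) : ℝ)) ∂P := by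
      refine setIntegral_congr_fun (hA n) fun ω hω => ?_
      have hω' : S ω = n := hω
      have hsij : ∀ j, s i j ω = n (i, j) := fun j => by rw [← hω']
      push_cast
      simp [hsij]
    rw [e1, setIntegral_const, smul_eq_mul, measureReal_def]
  have hH : ∫ ω, ((∏ j, (s i j ω).descFactorial (b j) : ℕ) : ℝ) ∂P
      = ∑' n : I × Fin J → ℕ,
          (P (S ⁻¹' {n})).toReal * (∏ j, ((n (i, j)).descFactorial (b j) : ℝ)) := by
    rw [aux_fiber hA hint]
    exact tsum_congr hfibh
  calc ∫ ω, g ω ∂P = ∑' n : I × Fin J → ℕ, ∫ ω in S ⁻¹' {n}, g ω ∂P := aux_fiber hA hgint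
    _ = ∑' n : I × Fin J → ℕ,
          ((P (S ⁻¹' {n})).toReal * (∏ j, ((n (i, j)).descFactorial (b j) : ℝ))) * M := by
        refine tsum_congr fun n => ?_
        rw [hfib n, mul_assoc]
    _ = (∑' n : I × Fin J → ℕ,
          (P (S ⁻¹' {n})).toReal * (∏ j, ((n (i, j)).descFactorial (b j) : ℝ))) * M :=
        tsum_mul_right
    _ = (∫ ω, ((∏ j, (s i j ω).descFactorial (b j) : ℕ) : ℝ) ∂P) * M := by rw [hH]


lemma key_integrable
    (r : I → Fin J → ℕ → Ω → ℝ) (s : I → Fin J → Ω → ℕ)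
    (hrmeas : ∀ i j k, Measurable (r i j k))
    (C : I → Fin J → ℝ) (hC : ∀ i j k ω, |r i j k ω| ≤ C i j)
    (hsmeas : ∀ i j, Measurable (s i j))
    (i : I) (b : Fin J → ℕ)
    (hint : Integrable (fun ω => ((∏ j, (s i j ω).descFactorial (b j) : ℕ) : ℝ)) P) :
    Integrable (fun ω => ∏ j, ∑ f : Fin (b j) ↪ Fin (s i j ω), ∏ β, r i j (f β : ℕ) ω) P := by
  have hgmeas : Measurable
      (fun ω => ∏ j, ∑ f : Fin (b j) ↪ Fin (s i j ω), ∏ β, r i j (f β : ℕ) ω) :=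
    Finset.measurable_prod _ fun j _ => aux_measurable_nat
      (F := fun m ω => ∑ f : Fin (b j) ↪ Fin m, ∏ β, r i j (f β : ℕ) ω)
      (fun m => Finset.measurable_sum _ fun f _ =>
        Finset.measurable_prod _ fun β _ => hrmeas i j _)
      (hsmeas i j)
  refine (hint.mul_const (∏ j, C i j ^ (b j))).mono' hgmeas.aestronglyMeasurable
    (Filter.Eventually.of_forall fun ω => ?_)
  rw [Real.norm_eq_abs]
  calc |∏ j, ∑ f : Fin (b j) ↪ Fin (s i j ω), ∏ β, r i j (f β : ℕ) ω|
      = ∏ j, |∑ f : Fin (b j) ↪ Fin (s i j ω), ∏ β, r i j (f β : ℕ) ω| := Finset.abs_prod _ _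
    _ ≤ ∏ j, ((s i j ω).descFactorial (b j) : ℝ) * C i j ^ (b j) :=
        Finset.prod_le_prod (fun _ _ => abs_nonneg _)
          (fun j _ => aux_emb_bound (fun k => hC i j k ω))
    _ = ((∏ j, (s i j ω).descFactorial (b j) : ℕ) : ℝ) * ∏ j, C i j ^ (b j) := by
        rw [Finset.prod_mul_distrib]
        push_cast
        ring

end Key


/-- **Proposition 5 (Appendix D): unbiased estimator for polynomial loss functions.**
With coefficients `p i z` (for `z = 0,…,D`) and `c i j`, target expectations `μ i j`,
i.i.d. bounded outcome sequences `(r i j k)` of mean `μ i j` (mutually independent across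
distinct `(i,j)`), and shot counts `(s i j)` jointly independent of all outcomes such that
for each tuple `b` of nonnegative integers with `∑ j, b j ≤ D` the expected product of
falling factorials `N i b = E[∏ j, (s i j)⁻(b j)]` is finite and positive, the estimator
`L̂ = ∑ i, ∑ z ≤ D, p i z * ∑_{b₁+⋯+b_J = z} (z!/(b₁!⋯b_J!)) * (∏ j, (c i j)^(b j)) * R̂ i b`
with `R̂ i b = (1/N i b) * ∏ j, (sum over ordered `b j`-tuples of pairwise distinct indices
of products of outcomes)` satisfies `E[L̂] = ∑ i, ∑ z ≤ D, p i z * (∑ j, c i j * μ i j)^z`. -/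
theorem unbiased_estimator_polynomial_loss
    {Ω : Type*} [MeasurableSpace Ω] (P : Measure Ω) [IsProbabilityMeasure P]
    {I : Type*} [Fintype I]
    (D J : ℕ) (hJ : 1 ≤ J)
    (p : I → ℕ → ℝ) (c μ : I → Fin J → ℝ)
    (r : I → Fin J → ℕ → Ω → ℝ) (s : I → Fin J → Ω → ℕ)
    (hrmeas : ∀ i j k, Measurable (r i j k))
    (hrbdd : ∀ i j, ∃ C, ∀ k ω, |r i j k ω| ≤ C)
    (hrindep : iIndepFun
      (fun q : (I × Fin J) × ℕ => r q.1.1 q.1.2 q.2) P)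
    (hrident : ∀ i j k, IdentDistrib (r i j k) (r i j 0) P P)
    (hrmean : ∀ i j k, ∫ ω, r i j k ω ∂P = μ i j)
    (hsmeas : ∀ i j, Measurable (s i j))
    (hsindep : IndepFun (fun ω => fun q : I × Fin J => s q.1 q.2 ω)
      (fun ω => fun q : (I × Fin J) × ℕ => r q.1.1 q.1.2 q.2 ω) P)
    (hNint : ∀ i (b : Fin J → ℕ), (∑ j, b j) ≤ D →
      Integrable (fun ω => ((∏ j, (s i j ω).descFactorial (b j) : ℕ) : ℝ)) P)
    (hNpos : ∀ i (b : Fin J → ℕ), (∑ j, b j) ≤ D →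
      0 < ∫ ω, ((∏ j, (s i j ω).descFactorial (b j) : ℕ) : ℝ) ∂P)
    (Rhat : I → (Fin J → ℕ) → Ω → ℝ) (Lhat : Ω → ℝ)
    (hRhat : ∀ i (b : Fin J → ℕ) ω, Rhat i b ω =
      (∫ ω', ((∏ j, (s i j ω').descFactorial (b j) : ℕ) : ℝ) ∂P)⁻¹ *
        ∏ j, (∑ f : Fin (b j) ↪ Fin (s i j ω), ∏ β, r i j (f β : ℕ) ω))
    (hLhat : ∀ ω, Lhat ω = ∑ i, ∑ z ∈ Finset.range (D + 1), p i z *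
      ∑ b ∈ Finset.Nat.antidiagonalTuple J z,
        ((z.factorial : ℝ) / ∏ j, ((b j).factorial : ℝ)) *
          (∏ j, (c i j) ^ (b j)) * Rhat i b ω) :
    ∫ ω, Lhat ω ∂P =
      ∑ i, ∑ z ∈ Finset.range (D + 1), p i z * (∑ j, c i j * μ i j) ^ z := by
  classical
  choose C0 hC0 using hrbdd
  set C : I → Fin J → ℝ := fun i j => max (C0 i j) 0 with hCdef
  have hC : ∀ i j k ω, |r i j k ω| ≤ C i j := fun i j k ω =>
    (hC0 i j k ω).trans (le_max_left _ _)
  have hmain : ∀ (i : I) (b : Fin J → ℕ), (∑ j, b j) ≤ D →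
      ∫ ω, Rhat i b ω ∂P = ∏ j, μ i j ^ (b j) := by
    intro i b hbD
    have hkey := key_integral P μ r s hrmeas C hC hrindep hrmean hsmeas hsindep i b
      (hNint i b hbD)
    have hR : Rhat i b = fun ω =>
        (∫ ω', ((∏ j, (s i j ω').descFactorial (b j) : ℕ) : ℝ) ∂P)⁻¹ *
          ∏ j, ∑ f : Fin (b j) ↪ Fin (s i j ω), ∏ β, r i j (f β : ℕ) ω := funext (hRhat i b)
    rw [hR, integral_const_mul _ _, hkey, ← mul_assoc,
      inv_mul_cancel₀ (ne_of_gt (hNpos i b hbD)), one_mul]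
  have hRint : ∀ (i : I) (b : Fin J → ℕ), (∑ j, b j) ≤ D → Integrable (Rhat i b) P := by
    intro i b hbD
    have hR : Rhat i b = fun ω =>
        (∫ ω', ((∏ j, (s i j ω').descFactorial (b j) : ℕ) : ℝ) ∂P)⁻¹ *
          ∏ j, ∑ f : Fin (b j) ↪ Fin (s i j ω), ∏ β, r i j (f β : ℕ) ω := funext (hRhat i b)
    rw [hR]
    exact (key_integrable P r s hrmeas C hC hsmeas i b (hNint i b hbD)).const_mul _
  have hsum : ∀ (b : Fin J → ℕ) z, z ∈ Finset.range (D + 1) →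
      b ∈ Finset.Nat.antidiagonalTuple J z → (∑ j, b j) ≤ D := by
    intro b z hz hb
    rw [Finset.Nat.mem_antidiagonalTuple] at hb
    rw [Finset.mem_range] at hz
    omega
  have hterm : ∀ i z, z ∈ Finset.range (D + 1) → Integrable (fun ω =>
      p i z * ∑ b ∈ Finset.Nat.antidiagonalTuple J z,
        ((z.factorial : ℝ) / ∏ j, ((b j).factorial : ℝ)) *
          (∏ j, (c i j) ^ (b j)) * Rhat i b ω) P := fun i z hz =>
    (integrable_finset_sum _ fun b hb =>
      ((hRint i b (hsum b z hz hb)).const_mul _)).const_mul _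
  have hL : Lhat = fun ω => ∑ i, ∑ z ∈ Finset.range (D + 1), p i z *
      ∑ b ∈ Finset.Nat.antidiagonalTuple J z,
        ((z.factorial : ℝ) / ∏ j, ((b j).factorial : ℝ)) *
          (∏ j, (c i j) ^ (b j)) * Rhat i b ω := funext hLhat
  rw [hL, integral_finset_sum _ (fun i _ => integrable_finset_sum _ fun z hz => hterm i z hz)]
  refine Finset.sum_congr rfl fun i _ => ?_
  rw [integral_finset_sum _ (fun z hz => hterm i z hz)]
  refine Finset.sum_congr rfl fun z hz => ?_
  rw [integral_const_mul _ _]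
  congr 1
  rw [integral_finset_sum _ (fun b hb => (hRint i b (hsum b z hz hb)).const_mul _)]
  have hval : ∀ b ∈ Finset.Nat.antidiagonalTuple J z,
      ∫ ω, ((z.factorial : ℝ) / ∏ j, ((b j).factorial : ℝ)) *
        (∏ j, (c i j) ^ (b j)) * Rhat i b ω ∂P
      = ((z.factorial : ℝ) / ∏ j, ((b j).factorial : ℝ)) *
        (∏ j, (c i j) ^ (b j)) * ∏ j, μ i j ^ (b j) := fun b hb => by
    rw [integral_const_mul _ _, hmain i b (hsum b z hz hb)]
  rw [Finset.sum_congr rfl hval]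
  have hset : Finset.Nat.antidiagonalTuple J z = Finset.piAntidiag Finset.univ z := by
    ext b
    simp [Finset.Nat.mem_antidiagonalTuple, Finset.mem_piAntidiag]
  rw [hset, Finset.sum_pow_eq_sum_piAntidiag]
  refine Finset.sum_congr rfl fun b hb => ?_
  have hsumb : ∑ j, b j = z := by
    rw [Finset.mem_piAntidiag] at hb
    exact hb.1
  have hfacne : (∏ j, ((b j).factorial : ℝ)) ≠ 0 := by positivity
  have hspec := Nat.multinomial_spec (Finset.univ : Finset (Fin J)) b
  have hmult : ((Nat.multinomial Finset.univ b : ℕ) : ℝ) * ∏ j, ((b j).factorial : ℝ)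
      = (z.factorial : ℝ) := by
    rw [← hsumb]
    exact_mod_cast by rw [mul_comm]; exact hspec
  have hmultinom : ((Nat.multinomial Finset.univ b : ℕ) : ℝ)
      = (z.factorial : ℝ) / ∏ j, ((b j).factorial : ℝ) := by
    rw [eq_div_iff hfacne]
    exact hmult
  rw [← hmultinom]
  simp [mul_pow, Finset.prod_mul_distrib, mul_assoc]
end

section
/- (Unbiasedness of the inverse-binomial-sampling estimator of the negative log-likelihood, Appendix A.) Let 0 < p ≤ 1 and let K be an ℕ-valued random variable with the geometric distribution of the number of Bernoulli(p) trials up to and including the first success: P(K = n) = p(1−p)^{n−1} for every integer n ≥ 1. Define the estimator L̂ = Σ_{k=1}^{K−1} 1/k (so L̂ = 0 when K = 1). Then L̂ is integrable and E[L̂] = −log p. Equivalently, Σ_{n=1}^{∞} p(1−p)^{n−1} · H_{n−1} = −log p, where H_m = Σ_{k=1}^{m} 1/k is the m-th harmonic number (H_0 = 0). -/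
open MeasureTheory ProbabilityTheory

lemma ibs_aux_hasSum {p : ℝ} (hp0 : 0 < p) (hp1 : p ≤ 1) :
    HasSum (fun m : ℕ => p * (1 - p) ^ m * ∑ k ∈ Finset.range m, (1 : ℝ) / (k + 1))
      (-Real.log p) := by
  set q : ℝ := 1 - p with hq
  have hq0 : 0 ≤ q := by simp [hq]; linarith
  have hq1 : q < 1 := by simp [hq]; linarith
  have hpq : 1 - q = p := by simp [hq]
  -- f over pairs
  set f : ℕ × ℕ → ℝ := fun x => p * q ^ (x.1 + 1 + x.2) / (x.1 + 1) with hf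
  have hfib : ∀ k : ℕ, HasSum (fun j => f (k, j)) (q ^ (k + 1) / (k + 1)) := by
    intro k
    have hg : HasSum (fun j : ℕ => q ^ j) (1 - q)⁻¹ :=
      hasSum_geometric_of_lt_one hq0 hq1
    have hthis := hg.mul_left (p * q ^ (k + 1) / (k + 1))
    have heq : (fun j => f (k, j)) = fun j => p * q ^ (k + 1) / (k + 1) * q ^ j := by
      funext j; simp only [hf, pow_add]; ring
    have hv : p * q ^ (k + 1) / (k + 1) * (1 - q)⁻¹ = q ^ (k + 1) / (k + 1) := by
      rw [hpq]; field_simp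
    rw [heq, ← hv]; exact hthis
  have hB : HasSum (fun k : ℕ => q ^ (k + 1) / (k + 1)) (-Real.log p) := by
    have := Real.hasSum_pow_div_log_of_abs_lt_one (x := q) (by rw [abs_of_nonneg hq0]; exact hq1)
    rwa [hpq] at this
  have hfnn : 0 ≤ f := by
    intro x
    have : (0:ℝ) ≤ q ^ (x.1 + 1 + x.2) := pow_nonneg hq0 _
    positivity
  have hsumf : Summable f := by
    rw [summable_prod_of_nonneg hfnn]
    refine ⟨fun k => (hfib k).summable, ?_⟩
    have : (fun k : ℕ => ∑' j, f (k, j)) = fun k : ℕ => q ^ (k + 1) / (k + 1) := by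
      funext k; exact (hfib k).tsum_eq
    rw [this]
    exact hB.summable
  have hf_sum : HasSum f (-Real.log p) := by
    have hts := hsumf.hasSum
    have h1 : HasSum (fun k : ℕ => q ^ (k + 1) / (k + 1)) (∑' x, f x) :=
      hts.prod_fiberwise hfib
    rwa [h1.unique hB] at hts
  -- reindex via injective map
  set g : ℕ × ℕ → ℝ := fun x => if x.2 < x.1 then p * q ^ x.1 / (x.2 + 1) else 0 with hgdef
  have hg_sum : HasSum g (-Real.log p) := by
    set e : ℕ × ℕ → ℕ × ℕ := fun x => (x.1 + 1 + x.2, x.1) with he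
    have hinj : Function.Injective e := by
      rintro ⟨k, j⟩ ⟨k', j'⟩ hkj
      simp only [he, Prod.mk.injEq] at hkj
      obtain ⟨h1, h2⟩ := hkj
      simp only [Prod.mk.injEq]
      omega
    have hrange : ∀ x ∉ Set.range e, g x = 0 := by
      rintro ⟨m, k⟩ hx
      by_contra h
      have hk : k < m := by
        by_contra hk; exact h (by simp [hgdef, hk])
      exact hx ⟨(k, m - k - 1), by simp [he]; omega⟩
    have hcomp : g ∘ e = f := by
      funext x
      simp [hgdef, he, hf]
      intro h
      omega
    rw [← hinj.hasSum_iff hrange, hcomp]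
    exact hf_sum
  have hfib2 : ∀ m : ℕ, HasSum (fun k => g (m, k))
      (p * q ^ m * ∑ k ∈ Finset.range m, (1 : ℝ) / (k + 1)) := by
    intro m
    have h0 : ∀ k ∉ Finset.range m, g (m, k) = 0 := by
      intro k hk
      simp only [Finset.mem_range] at hk
      simp [hgdef, hk]
    have := hasSum_sum_of_ne_finset_zero (L := SummationFilter.unconditional ℕ) h0
    convert this using 1
    rw [Finset.mul_sum]
    refine Finset.sum_congr rfl fun k hk => ?_
    simp only [Finset.mem_range] at hk
    simp [hgdef, hk]
    ring
  exact hg_sum.prod_fiberwise hfib2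

/-- **Unbiasedness of the inverse-binomial-sampling estimator of the negative
log-likelihood.** If `K` is geometrically distributed with `P(K = n) = p (1-p)^(n-1)` for
every `n ≥ 1` (the number of Bernoulli(`p`) trials up to and including the first success),
then the estimator `L̂ = ∑_{k=1}^{K-1} 1/k` (with `L̂ = 0` when `K = 1`) is integrable and
`E[L̂] = -log p`. -/
theorem ibs_estimator_unbiased_neg_log_likelihood
    {Ω : Type*} [MeasurableSpace Ω] (P : Measure Ω) [IsProbabilityMeasure P]
    (p : ℝ) (hp0 : 0 < p) (hp1 : p ≤ 1)
    (K : Ω → ℕ) (hKmeas : Measurable K)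
    (hgeom : ∀ n : ℕ, 1 ≤ n →
      P {ω | K ω = n} = ENNReal.ofReal (p * (1 - p) ^ (n - 1))) :
    Integrable (fun ω => ∑ k ∈ Finset.range (K ω - 1), (1 : ℝ) / (k + 1)) P ∧
      ∫ ω, ∑ k ∈ Finset.range (K ω - 1), (1 : ℝ) / (k + 1) ∂P = -Real.log p := by
  set q : ℝ := 1 - p with hq
  have hq0 : 0 ≤ q := by simp [hq]; linarith
  set G : ℕ → ℝ := fun n => ∑ k ∈ Finset.range (n - 1), (1 : ℝ) / (k + 1) with hG
  have hGnn : ∀ n, 0 ≤ G n := fun n =>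
    Finset.sum_nonneg fun k _ => by positivity
  set μ : Measure ℕ := P.map K with hμ
  have hμprob : IsProbabilityMeasure μ := Measure.isProbabilityMeasure_map hKmeas.aemeasurable
  have hμn : ∀ n : ℕ, μ {n} = P {ω | K ω = n} := by
    intro n
    rw [hμ, Measure.map_apply hKmeas (measurableSet_singleton n)]
    rfl
  -- the series c n = (μ {n}).toReal * G n
  set c : ℕ → ℝ := fun n => (μ {n}).toReal * G n with hc
  have hc0 : c 0 = 0 := by simp [hc, hG]
  have hcsucc : ∀ m : ℕ, c (m + 1) = p * q ^ m * ∑ k ∈ Finset.range m, (1 : ℝ) / (k + 1) := by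
    intro m
    have hnn : 0 ≤ p * q ^ m := mul_nonneg hp0.le (pow_nonneg hq0 m)
    simp only [hc, hμn, hgeom (m + 1) (by omega), Nat.add_sub_cancel]
    rw [ENNReal.toReal_ofReal hnn]
    simp [hG]
  have hcsum : HasSum c (-Real.log p) := by
    have h1 : HasSum (fun m => c (m + 1)) (-Real.log p) := by
      have := ibs_aux_hasSum hp0 hp1
      simp only [← hq] at this
      convert this using 2 with m
      exact hcsucc m
    have := (hasSum_nat_add_iff (f := c) 1).mp (by simpa using h1)
    simpa [hc0] using this
  have hcnn : ∀ n, 0 ≤ c n := fun n =>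
    mul_nonneg ENNReal.toReal_nonneg (hGnn n)
  -- integrability of G wrt μ
  have hGint : Integrable G μ := by
    refine ⟨(measurable_from_nat (f := G)).aestronglyMeasurable, ?_⟩
    rw [hasFiniteIntegral_iff_norm]
    have : (∫⁻ n, ENNReal.ofReal ‖G n‖ ∂μ) = ∑' n, ENNReal.ofReal ‖G n‖ * μ {n} :=
      lintegral_countable' _
    rw [this]
    have heq : ∀ n, ENNReal.ofReal ‖G n‖ * μ {n} = ENNReal.ofReal (c n) := by
      intro n
      have hμfin : μ {n} ≠ ⊤ := measure_ne_top μ _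
      rw [Real.norm_of_nonneg (hGnn n)]
      show ENNReal.ofReal (G n) * μ {n} = ENNReal.ofReal ((μ {n}).toReal * G n)
      rw [show (μ {n}).toReal * G n = G n * (μ {n}).toReal by ring,
        ENNReal.ofReal_mul (hGnn n), ENNReal.ofReal_toReal hμfin]
    simp only [heq]
    rw [← ENNReal.ofReal_tsum_of_nonneg hcnn hcsum.summable]
    exact ENNReal.ofReal_lt_top
  have hInt : Integrable (fun ω => G (K ω)) P := by
    rw [← Function.comp_def]
    exact (integrable_map_measure (measurable_from_nat (f := G)).aestronglyMeasurable
      hKmeas.aemeasurable).mp hGint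
  refine ⟨hInt, ?_⟩
  have : ∫ ω, G (K ω) ∂P = ∫ n, G n ∂μ := by
    rw [hμ, integral_map hKmeas.aemeasurable
      (measurable_from_nat (f := G)).aestronglyMeasurable]
  rw [show (fun ω => ∑ k ∈ Finset.range (K ω - 1), (1 : ℝ) / (k + 1)) = fun ω => G (K ω) from rfl]
  rw [this, integral_countable' hGint]
  simp only [smul_eq_mul]
  exact hcsum.tsum_eq
end
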